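/- arXiv:2510.13076 — 8 statements merged into one kernel-verified Lean document; each statement's English description precedes it below -/
import Mathlib

section
/- Let b ≥ 2 and let 𝒜 ⊂ {0,...,b−1} be a set of digits of size b−s containing two consecutive integers n and n+1. Then for every real θ, |∑_{a ∈ 𝒜} e(aθ)| ≤ (b−s)·exp(−‖θ‖²/b). -/
open Finset

/-- The standard complex exponential `e(x) = exp(2πix)`. -/
noncomputable def e (x : ℝ) : ℂ := Complex.exp (2 * (Real.pi : ℂ) * Complex.I * (x : ℂ))

/-- Distance from a real number to the nearest integer. -/
noncomputable def nint (x : ℝ) : ℝ := |x - round x|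

/-- Fourier transform of the indicator of integers `n < b^N` all of whose
base-`b` digits lie in `A`. -/
noncomputable def Chat (b : ℕ) (A : Finset ℕ) (N : ℕ) (x : ℝ) : ℂ :=
  ∑ n ∈ (Finset.range (b ^ N)).filter (fun n => ∀ i < N, n / b ^ i % b ∈ A), e (n * x)

/-- The excluded digit set `{0,...,b-1} \ A` is a disjoint union of `k`
(nonempty) intervals of integers. -/
def ExcludedUnionIntervals (b k : ℕ) (A : Finset ℕ) : Prop :=
  ∃ l r : Fin k → ℕ, (∀ i, l i ≤ r i) ∧
    (∀ i j, i ≠ j → Disjoint (Finset.Icc (l i) (r i)) (Finset.Icc (l j) (r j))) ∧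
    Finset.range b \ A = Finset.univ.biUnion (fun i => Finset.Icc (l i) (r i))

lemma abs_e (x : ℝ) : ‖e x‖ = 1 := by
  unfold e
  rw [Complex.norm_exp]
  have : (2 * (Real.pi : ℂ) * Complex.I * (x : ℂ)).re = 0 := by simp
  rw [this, Real.exp_zero]

lemma e_add (x y : ℝ) : e (x + y) = e x * e y := by
  unfold e
  rw [← Complex.exp_add]
  congr 1
  push_cast
  ring

lemma abs_one_add_e (x : ℝ) : ‖1 + e x‖ = 2 * |Real.cos (Real.pi * x)| := by
  have key : (1 : ℂ) + e x
      = Complex.exp ((Real.pi : ℂ) * x * Complex.I) * (2 * Complex.cos ((Real.pi : ℂ) * x)) := by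
    rw [Complex.cos]
    unfold e
    have h2 : (2:ℂ) * ((Complex.exp ((Real.pi:ℂ) * x * Complex.I) +
        Complex.exp (-((Real.pi:ℂ) * x) * Complex.I)) / 2)
        = Complex.exp ((Real.pi:ℂ) * x * Complex.I) +
          Complex.exp (-((Real.pi:ℂ) * x) * Complex.I) := by ring
    have e1 : (Real.pi:ℂ) * x * Complex.I + (Real.pi:ℂ) * x * Complex.I
        = 2 * (Real.pi:ℂ) * Complex.I * x := by ring
    have e2 : (Real.pi:ℂ) * x * Complex.I + -((Real.pi:ℂ) * x) * Complex.I = 0 := by ring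
    rw [h2, mul_add, ← Complex.exp_add, ← Complex.exp_add, e1, e2, Complex.exp_zero]
    ring
  rw [key, norm_mul, Complex.norm_exp]
  have h1 : (((Real.pi : ℂ) * x * Complex.I)).re = 0 := by simp
  rw [h1, Real.exp_zero, one_mul]
  have h2 : ((Real.pi : ℂ) * x) = ((Real.pi * x : ℝ) : ℂ) := by push_cast; ring
  rw [h2, ← Complex.ofReal_cos, norm_mul, Complex.norm_real, Real.norm_eq_abs, Complex.norm_two]

set_option maxHeartbeats 1000000 in
theorem stmt1 (b s : ℕ) (A : Finset ℕ) (hb : 2 ≤ b) (hs : s ≤ b)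
    (hA : A ⊆ Finset.range b) (hcard : A.card = b - s)
    (n : ℕ) (hn : n ∈ A) (hn1 : n + 1 ∈ A) (θ : ℝ) :
    ‖∑ a ∈ A, e (a * θ)‖ ≤ ((b : ℝ) - s) * Real.exp (-(nint θ) ^ 2 / b) := by
  classical
  set x : ℝ := nint θ with hxdef
  have hx0 : 0 ≤ x := abs_nonneg _
  have hx2 : x ≤ 1 / 2 := abs_sub_round θ
  set C : ℝ := (b : ℝ) - s with hC
  have hCeq : C = (A.card : ℝ) := by
    rw [hC, hcard, Nat.cast_sub hs]
  have hCb : C ≤ b := by rw [hC]; have : (0:ℝ) ≤ s := Nat.cast_nonneg s; linarith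
  have hC2 : 2 ≤ C := by
    rw [hCeq]
    have : ({n, n+1} : Finset ℕ) ⊆ A := by
      intro a ha; simp at ha; rcases ha with h | h <;> simp [h, hn, hn1]
    have hc : ({n, n+1} : Finset ℕ).card ≤ A.card := Finset.card_le_card this
    have : ({n, n+1} : Finset ℕ).card = 2 := by simp
    rw [this] at hc
    exact_mod_cast hc
  -- split the sum
  have hmem1 : (n+1) ∈ A.erase n := Finset.mem_erase.2 ⟨by omega, hn1⟩
  set A' := (A.erase n).erase (n+1) with hA'
  have hsplit : ∑ a ∈ A, e (a * θ)
      = e (n * θ) + e ((n+1) * θ) + ∑ a ∈ A', e (a * θ) := by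
    rw [← Finset.add_sum_erase _ _ hn, ← Finset.add_sum_erase _ _ hmem1]
    push_cast
    ring
  have hcardA' : (A'.card : ℝ) = C - 2 := by
    rw [hA', Finset.card_erase_of_mem hmem1, Finset.card_erase_of_mem hn, hCeq]
    have h2 : 2 ≤ A.card := by exact_mod_cast hCeq ▸ hC2
    push_cast [Nat.cast_sub (by omega : 1 ≤ A.card - 1), Nat.cast_sub (by omega : 1 ≤ A.card)]
    ring
  -- bound
  have habs2 : ‖e (n * θ) + e ((n+1) * θ)‖ = 2 * |Real.cos (Real.pi * θ)| := by
    have : e ((n+1) * θ) = e (n * θ) * e θ := by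
      rw [show ((n:ℝ)+1)*θ = (n:ℝ)*θ + θ by ring, e_add]
    rw [this, ← mul_one_add, norm_mul, abs_e, one_mul, abs_one_add_e]
  have hbound : ‖∑ a ∈ A, e (a * θ)‖
      ≤ 2 * |Real.cos (Real.pi * θ)| + (C - 2) := by
    rw [hsplit]
    calc ‖e (n * θ) + e ((n+1) * θ) + ∑ a ∈ A', e (a * θ)‖
        ≤ ‖e (n * θ) + e ((n+1) * θ)‖ + ‖∑ a ∈ A', e (a * θ)‖ :=
          norm_add_le _ _
      _ ≤ 2 * |Real.cos (Real.pi * θ)| + (C - 2) := by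
          rw [habs2]
          gcongr
          calc ‖∑ a ∈ A', e (a * θ)‖ ≤ ∑ a ∈ A', ‖e (a * θ)‖ :=
                norm_sum_le _ _
            _ = A'.card := by simp [abs_e]
            _ = C - 2 := hcardA'
  -- |cos(πθ)| = cos(πx)
  have hcosθ : |Real.cos (Real.pi * θ)| = Real.cos (Real.pi * x) := by
    have h1 : Real.pi * θ = (round θ : ℤ) * Real.pi - (Real.pi * ((round θ : ℤ) - θ)) := by ring
    rw [h1, Real.cos_int_mul_pi_sub, abs_mul]
    have hpow : |((-1:ℝ)) ^ (round θ)| = 1 := by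
      rcases Int.even_or_odd (round θ) with h | h
      · rw [h.neg_one_zpow]; norm_num
      · rw [h.neg_one_zpow]; norm_num
    rw [hpow, one_mul]
    have h3 : Real.pi * x = |Real.pi * ((round θ : ℤ) - θ)| := by
      rw [abs_mul, abs_of_nonneg Real.pi_pos.le, hxdef]
      unfold nint
      rw [← abs_neg (θ - round θ)]
      ring_nf
    rw [h3, Real.cos_abs, abs_of_nonneg]
    apply Real.cos_nonneg_of_mem_Icc
    constructor
    · have : |Real.pi * ((round θ : ℤ) - θ)| ≤ Real.pi / 2 := by
        rw [← h3]
        have := Real.pi_pos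
        nlinarith
      nlinarith [abs_nonneg (Real.pi * ((round θ : ℤ) - θ)), neg_abs_le (Real.pi * ((round θ : ℤ) - θ))]
    · calc Real.pi * ((round θ : ℤ) - θ) ≤ |Real.pi * ((round θ : ℤ) - θ)| := le_abs_self _
        _ ≤ Real.pi / 2 := by rw [← h3]; have := Real.pi_pos; nlinarith
  -- final numeric inequality
  have hsin : x ≤ 2 * Real.sin (Real.pi * x / 2) := by
    have hj := Real.mul_le_sin (x := Real.pi * x / 2)
      (by positivity) (by nlinarith [Real.pi_pos])
    have hπ := Real.pi_pos
    rw [div_mul_eq_mul_div, div_le_iff₀ hπ] at hj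
    nlinarith [Real.sin_nonneg_of_nonneg_of_le_pi (x := Real.pi * x / 2) (by positivity)
      (by nlinarith)]
  have hcosx : 2 * Real.cos (Real.pi * x) ≤ 2 - x ^ 2 := by
    have hs2 : Real.cos (Real.pi * x) = 1 - 2 * Real.sin (Real.pi * x / 2) ^ 2 := by
      have := Real.sin_sq_add_cos_sq (Real.pi * x / 2)
      have h2 : Real.cos (Real.pi * x) = Real.cos (2 * (Real.pi * x / 2)) := by ring_nf
      rw [h2, Real.cos_two_mul]
      nlinarith
    rw [hs2]
    have hsn : 0 ≤ Real.sin (Real.pi * x / 2) := by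
      apply Real.sin_nonneg_of_nonneg_of_le_pi <;> nlinarith [Real.pi_pos]
    have hq : x * x ≤ (2 * Real.sin (Real.pi * x / 2)) * (2 * Real.sin (Real.pi * x / 2)) :=
      mul_le_mul hsin hsin hx0 (by linarith)
    nlinarith [hq]
  have hexp : 1 - x ^ 2 / b ≤ Real.exp (-x ^ 2 / b) := by
    have := Real.add_one_le_exp (-x ^ 2 / b)
    rw [neg_div] at this ⊢
    linarith
  have hbpos : (0:ℝ) < b := by positivity
  calc ‖∑ a ∈ A, e (a * θ)‖ ≤ 2 * |Real.cos (Real.pi * θ)| + (C - 2) := hbound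
    _ = 2 * Real.cos (Real.pi * x) + (C - 2) := by rw [hcosθ]
    _ ≤ C - x ^ 2 := by nlinarith
    _ ≤ C * (1 - x ^ 2 / b) := by
        have : C * (x ^ 2 / b) ≤ x ^ 2 := by
          rw [mul_div_assoc']
          rw [div_le_iff₀ hbpos]
          nlinarith
        nlinarith
    _ ≤ C * Real.exp (-x ^ 2 / b) := by nlinarith [Real.exp_pos (-x^2/b)]
end

section
/- Let b ≥ 2 and suppose the excluded digit set {0,...,b−1} \ 𝒜 (of size s) is a disjoint union of k intervals of integers. Then for every real x, |Ĉ_{b^N}(x)| ≤ ∏_{i=0}^{N−1} min{b−s, (k+1)/(2‖b^i x‖)}. -/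
open Finset

lemma abs_e_sub_one (x : ℝ) : ‖e x - 1‖ = 2 * |Real.sin (Real.pi * x)| := by
  have key : e x - 1 =
      Complex.exp (↑(Real.pi * x) * Complex.I) * (2 * Complex.I * Complex.sin (↑(Real.pi * x))) := by
    rw [Complex.sin, e]
    rw [show 2*(Real.pi:ℂ)*Complex.I*(x:ℂ) = ↑(Real.pi*x)*Complex.I + ↑(Real.pi*x)*Complex.I from by
      push_cast; ring, Complex.exp_add]
    rw [show -(↑(Real.pi*x):ℂ)*Complex.I = -(↑(Real.pi*x)*Complex.I) from by ring, Complex.exp_neg]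
    have h := Complex.exp_ne_zero (↑(Real.pi*x)*Complex.I)
    field_simp
    ring_nf
    rw [Complex.I_sq]
    ring
  rw [key, norm_mul, Complex.norm_exp_ofReal_mul_I, one_mul, norm_mul, norm_mul,
    Complex.norm_two, Complex.norm_I, ← Complex.ofReal_sin, Complex.norm_real, Real.norm_eq_abs]
  ring

lemma nint_le_abs_sin (x : ℝ) : 2 * nint x ≤ |Real.sin (Real.pi * x)| := by
  have hround : |x - round x| ≤ 1/2 := abs_sub_round x
  set t := x - round x with ht
  have hx : x = t + (round x : ℤ) := by push_cast; ring
  have hsin : Real.sin (Real.pi * x) = (-1)^(round x) * Real.sin (Real.pi * t) := by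
    have h := Real.sin_add_int_mul_pi (Real.pi * t) (round x)
    rw [← h]; congr 1; rw [ht]; push_cast; ring
  rw [hsin, abs_mul]
  rw [show |((-1:ℝ)) ^ round x| = 1 from by
    rcases Int.even_or_odd (round x) with he | ho
    · rw [he.neg_one_zpow]; simp
    · rw [ho.neg_one_zpow]; simp, one_mul]
  have h1 : |Real.sin (Real.pi * t)| = Real.sin (Real.pi * |t|) := by
    rcases abs_cases t with ⟨h, _⟩ | ⟨h, hneg⟩
    · rw [h, abs_of_nonneg]
      apply Real.sin_nonneg_of_nonneg_of_le_pi
      · positivity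
      · nlinarith [Real.pi_pos, abs_nonneg t, hround]
    · rw [h, mul_neg, Real.sin_neg]
      rw [abs_of_nonpos (Real.sin_nonpos_of_nonpos_of_neg_pi_le
        (by nlinarith [Real.pi_pos]) (by nlinarith [Real.pi_pos, abs_nonneg t, hround]))]
  rw [h1]
  have := Real.mul_le_sin (x := Real.pi * |t|) (by positivity)
    (by nlinarith [Real.pi_pos, hround, abs_nonneg t])
  have hpi := Real.pi_pos
  calc 2 * nint x = 2 / Real.pi * (Real.pi * |t|) := by
        rw [nint]; field_simp; rw [← ht]
      _ ≤ Real.sin (Real.pi * |t|) := this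

lemma e_nat_mul (n : ℕ) (x : ℝ) : e (n * x) = (e x) ^ n := by
  induction n with
  | zero => simp [e]
  | succ m ih => push_cast; rw [add_mul, one_mul, e_add, ih, pow_succ]

lemma four_nint_le (θ : ℝ) : 4 * nint θ ≤ ‖e θ - 1‖ := by
  rw [abs_e_sub_one]; nlinarith [nint_le_abs_sin θ]

lemma nint_pos {θ : ℝ} (h : nint θ ≠ 0) : 0 < nint θ :=
  lt_of_le_of_ne (abs_nonneg _) (Ne.symm h)

lemma geom_bound (θ : ℝ) (h : nint θ ≠ 0) (n : ℕ) :
    ‖∑ j ∈ Finset.range n, (e θ)^j‖ ≤ 1/(2 * nint θ) := by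
  have hnint := nint_pos h
  have hne : e θ ≠ 1 := by
    intro heq
    have h4 := four_nint_le θ
    rw [heq] at h4; simp at h4; linarith
  rw [geom_sum_eq hne, norm_div]
  have habs : ‖e θ ^ n - 1‖ ≤ 2 := by
    calc ‖e θ ^ n - 1‖ ≤ ‖e θ ^ n‖ + ‖(1 : ℂ)‖ :=
          by apply norm_sub_le
      _ = 2 := by rw [norm_pow, abs_e]; norm_num
  have hden := four_nint_le θ
  have hdenpos : (0:ℝ) < ‖e θ - 1‖ := by linarith
  calc ‖e θ ^ n - 1‖ / ‖e θ - 1‖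
      ≤ 2 / (4 * nint θ) := by
        exact div_le_div₀ (by norm_num) habs (by positivity) hden
      _ = 1/(2 * nint θ) := by field_simp; ring

lemma icc_bound (θ : ℝ) (h : nint θ ≠ 0) (a a' : ℕ) :
    ‖∑ c ∈ Finset.Icc a a', e (c * θ)‖ ≤ 1/(2 * nint θ) := by
  rw [← Finset.Ico_add_one_right_eq_Icc, Finset.sum_Ico_eq_sum_range]
  have heq : ∀ j ∈ Finset.range (a' + 1 - a), e (↑(a + j) * θ) = e (a * θ) * (e θ)^j := by
    intro j _
    push_cast
    rw [add_mul, e_add, e_nat_mul j θ]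
  rw [Finset.sum_congr rfl heq, ← Finset.mul_sum, norm_mul, abs_e, one_mul]
  exact geom_bound θ h _

lemma S_bound_card (b s : ℕ) (A : Finset ℕ) (hs : s ≤ b) (hcard : A.card = b - s) (θ : ℝ) :
    ‖∑ d ∈ A, e (d * θ)‖ ≤ (b : ℝ) - s := by
  calc ‖∑ d ∈ A, e (d * θ)‖ ≤ ∑ d ∈ A, ‖e (d * θ)‖ :=
        norm_sum_le _ _
    _ = A.card := by simp [abs_e]
    _ = (b : ℝ) - s := by rw [hcard, Nat.cast_sub hs]

lemma S_bound_k (b k : ℕ) (A : Finset ℕ) (hb : 1 ≤ b) (hA : A ⊆ Finset.range b)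
    (hk : ExcludedUnionIntervals b k A) (θ : ℝ) (h : nint θ ≠ 0) :
    ‖∑ d ∈ A, e (d * θ)‖ ≤ ((k : ℝ) + 1) / (2 * nint θ) := by
  obtain ⟨l, r, hlr, hdisj, hunion⟩ := hk
  have hA' : A = Finset.range b \ (Finset.range b \ A) := (Finset.sdiff_sdiff_eq_self hA).symm
  have hsum : ∑ d ∈ A, e (d * θ) =
      (∑ d ∈ Finset.range b, e (d * θ)) - ∑ d ∈ Finset.range b \ A, e (d * θ) := by
    have h2 := Finset.sum_sdiff (f := fun d : ℕ => e (d * θ))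
      (Finset.sdiff_subset (s := Finset.range b) (t := A))
    rw [← hA'] at h2
    rw [eq_sub_iff_add_eq]
    exact h2
  have hrange : ‖∑ d ∈ Finset.range b, e (d * θ)‖ ≤ 1 / (2 * nint θ) := by
    have : Finset.range b = Finset.Icc 0 (b - 1) := by
      rw [Finset.range_eq_Ico, ← Finset.Ico_add_one_right_eq_Icc]
      congr 1
      omega
    rw [this]
    exact icc_bound θ h 0 (b - 1)
  have hexc : ‖∑ d ∈ Finset.range b \ A, e (d * θ)‖ ≤ (k : ℝ) / (2 * nint θ) := by
    rw [hunion, Finset.sum_biUnion (fun i _ j _ hij => hdisj i j hij)]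
    calc ‖∑ i : Fin k, ∑ d ∈ Finset.Icc (l i) (r i), e (d * θ)‖
        ≤ ∑ i : Fin k, ‖∑ d ∈ Finset.Icc (l i) (r i), e (d * θ)‖ :=
          norm_sum_le _ _
      _ ≤ ∑ _i : Fin k, 1 / (2 * nint θ) :=
          Finset.sum_le_sum (fun i _ => icc_bound θ h (l i) (r i))
      _ = (k : ℝ) / (2 * nint θ) := by simp; ring
  calc ‖∑ d ∈ A, e (d * θ)‖
      ≤ ‖∑ d ∈ Finset.range b, e (d * θ)‖ +
        ‖∑ d ∈ Finset.range b \ A, e (d * θ)‖ := by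
        rw [hsum]; exact norm_sub_le _ _
    _ ≤ 1 / (2 * nint θ) + (k : ℝ) / (2 * nint θ) := add_le_add hrange hexc
    _ = ((k : ℝ) + 1) / (2 * nint θ) := by ring

lemma chat_factor (b : ℕ) (hb : 1 ≤ b) (A : Finset ℕ) (hA : A ⊆ Finset.range b) (N : ℕ) :
    ∀ x : ℝ, Chat b A N x = ∏ i ∈ Finset.range N, ∑ d ∈ A, e (d * ((b : ℝ) ^ i * x)) := by
  induction N with
  | zero => intro x; simp [Chat, e]
  | succ N ih =>
    intro x
    have key : Chat b A (N + 1) x = (∑ d ∈ A, e (d * x)) * Chat b A N (b * x) := by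
      rw [Chat, Chat, Finset.sum_mul_sum, ← Finset.sum_product']
      apply Finset.sum_nbij' (fun n => (n % b, n / b)) (fun p => p.1 + b * p.2)
      · intro n hn
        simp only [Finset.mem_filter, Finset.mem_range] at hn ⊢
        obtain ⟨hlt, hdig⟩ := hn
        rw [Finset.mem_product]
        constructor
        · have := hdig 0 (Nat.succ_pos N)
          simpa using this
        · simp only [Finset.mem_filter, Finset.mem_range]
          constructor
          · have : n < b * b ^ N := by rw [← pow_succ']; exact hlt
            exact Nat.div_lt_of_lt_mul (by omega)
          · intro i hi
            have := hdig (i + 1) (by omega)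
            rwa [Nat.div_div_eq_div_mul, ← pow_succ'] 
      · intro p hp
        rw [Finset.mem_product] at hp
        obtain ⟨hd, hm⟩ := hp
        simp only [Finset.mem_filter, Finset.mem_range] at hm ⊢
        have hdb : p.1 < b := Finset.mem_range.mp (hA hd)
        constructor
        · have : p.1 + b * p.2 < b * b ^ N := by
            have := hm.1
            nlinarith
          rw [pow_succ']; exact this
        · intro i hi
          rcases Nat.eq_zero_or_pos i with h0 | hpos
          · subst h0
            simpa [Nat.add_mul_mod_self_left, Nat.mod_eq_of_lt hdb] using hd
          · obtain ⟨j, rfl⟩ := Nat.exists_eq_succ_of_ne_zero (Nat.pos_iff_ne_zero.mp hpos)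
            have hdiv : (p.1 + b * p.2) / b ^ (j + 1) = p.2 / b ^ j := by
              rw [pow_succ', ← Nat.div_div_eq_div_mul,
                Nat.add_mul_div_left _ _ (by omega : 0 < b), Nat.div_eq_of_lt hdb, zero_add]
            rw [hdiv]
            exact hm.2 j (by omega)
      · intro n hn
        exact (Nat.mod_add_div n b).symm ▸ rfl
      · intro p hp
        rw [Finset.mem_product] at hp
        have hdb : p.1 < b := Finset.mem_range.mp (hA hp.1)
        simp [Nat.add_mul_div_left _ _ (by omega : 0 < b), Nat.div_eq_of_lt hdb,
          Nat.add_mul_mod_self_left, Nat.mod_eq_of_lt hdb]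
      · intro n hn
        have hsplit : (n : ℝ) * x = (n % b : ℕ) * x + (n / b : ℕ) * (b * x) := by
          push_cast
          have hmd : ((n % b : ℕ) : ℝ) + (b : ℝ) * ((n / b : ℕ) : ℝ) = (n : ℝ) := by
            exact_mod_cast congrArg (Nat.cast : ℕ → ℝ) (Nat.mod_add_div n b)
          rw [← hmd]
          ring
        rw [hsplit, e_add]
    have h1 : ∀ i ∈ Finset.range N, (∑ d ∈ A, e (d * ((b:ℝ)^i * (b*x)))) =
        ∑ d ∈ A, e (d * ((b:ℝ)^(i+1) * x)) := by
      intro i _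
      apply Finset.sum_congr rfl
      intro d _
      congr 1
      push_cast
      ring
    rw [key, ih (b * x), Finset.prod_congr rfl h1, Finset.prod_range_succ', mul_comm]
    congr 1
    apply Finset.sum_congr rfl
    intro d _
    norm_num

theorem stmt3 (b s k N : ℕ) (A : Finset ℕ) (hb : 2 ≤ b) (hs : s ≤ b)
    (hA : A ⊆ Finset.range b) (hcard : A.card = b - s)
    (hk : ExcludedUnionIntervals b k A) (x : ℝ) :
    ‖Chat b A N x‖ ≤
      ∏ i ∈ Finset.range N,
        (if nint ((b : ℝ) ^ i * x) = 0 then ((b : ℝ) - s)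
         else min ((b : ℝ) - s) (((k : ℝ) + 1) / (2 * nint ((b : ℝ) ^ i * x)))) := by
  rw [chat_factor b (by omega) A hA N x, norm_prod]
  apply Finset.prod_le_prod
  · intro i _
    exact norm_nonneg _
  · intro i _
    by_cases h0 : nint ((b : ℝ) ^ i * x) = 0
    · rw [if_pos h0]
      exact S_bound_card b s A hs hcard _
    · rw [if_neg h0]
      exact le_min (S_bound_card b s A hs hcard _)
        (S_bound_k b k A (by omega) hA hk _ h0)
end

section
/- For any real t with ‖b^i t‖ ≥ 1/d for all 0 ≤ i < N (where d ≥ 2), any interval I ⊂ [0, N) of length at least log d / log b contains an index i with ‖b^i t‖ ≥ 1/(2b²). Consequently ∑_{i=0}^{N−1} ‖b^i t‖² ≥ (1/(4b⁴))·⌊N log b / (3 log d)⌋ whenever the hypothesis holds for all i < N. -/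
open Finset

lemma nint_b_mul (b : ℕ) (hb : 1 ≤ b) (x : ℝ) (h : nint x < 1 / (2 * b)) :
    nint ((b : ℝ) * x) = b * nint x := by
  have hb0 : (0:ℝ) < b := by exact_mod_cast hb
  have hy : |(b:ℝ) * (x - round x)| < 1/2 := by
    rw [abs_mul, abs_of_pos hb0]
    calc (b:ℝ) * |x - round x| < b * (1/(2*b)) := by
          exact mul_lt_mul_of_pos_left h hb0
      _ = 1/2 := by field_simp
  have hr : round ((b:ℝ) * x) = b * round x := by
    have he : (b:ℝ) * x = (b:ℝ) * (x - round x) + ((b * round x : ℤ) : ℝ) := by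
      push_cast; ring
    rw [he, round_add_intCast, round_eq_zero_iff.mpr ?_, zero_add]
    constructor
    · linarith [neg_abs_le ((b:ℝ) * (x - round x))]
    · linarith [le_abs_self ((b:ℝ) * (x - round x))]
  unfold nint
  rw [hr]
  push_cast
  rw [show (b:ℝ) * x - (b:ℝ) * round x = (b:ℝ) * (x - round x) by ring,
    abs_mul, abs_of_pos hb0]

lemma nint_chain (b : ℕ) (hb : 2 ≤ b) (t : ℝ) (a : ℕ) :
    ∀ k, (∀ j, j ≤ k → nint ((b:ℝ) ^ (a + j) * t) < 1 / (2 * (b:ℝ) ^ 2)) →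
      (b:ℝ) ^ k * nint ((b:ℝ) ^ a * t) = nint ((b:ℝ) ^ (a + k) * t) := by
  intro k
  induction k with
  | zero => simp
  | succ k ih =>
    intro h
    have hb0 : (2:ℝ) ≤ b := by exact_mod_cast hb
    have h1 := ih (fun j hj => h j (le_trans hj (Nat.le_succ k)))
    have hlt : nint ((b:ℝ) ^ (a + k) * t) < 1 / (2 * b) := by
      have h2 := h k (Nat.le_succ k)
      have h3 : 1 / (2 * (b:ℝ) ^ 2) ≤ 1 / (2 * b) := by
        apply one_div_le_one_div_of_le (by linarith)
        nlinarith
      linarith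
    have he : (b:ℝ) ^ (a + (k + 1)) * t = (b:ℝ) * ((b:ℝ) ^ (a + k) * t) := by
      rw [show a + (k + 1) = (a + k) + 1 from rfl, pow_succ]; ring
    rw [he, nint_b_mul b (by omega) _ hlt, ← h1, pow_succ]; ring

lemma part1 (b d N : ℕ) (hb : 2 ≤ b) (hd : 2 ≤ d) (t : ℝ)
    (ht : ∀ i < N, 1 / (d : ℝ) ≤ nint ((b : ℝ) ^ i * t)) (a L : ℕ) (haL : a + L ≤ N)
    (hL : Real.log d / Real.log b ≤ (L : ℝ)) :
    ∃ i, a ≤ i ∧ i < a + L ∧ 1 / (2 * (b : ℝ) ^ 2) ≤ nint ((b : ℝ) ^ i * t) := by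
  by_contra hcon
  push_neg at hcon
  have hb1 : (1:ℝ) < b := by exact_mod_cast (by omega : 1 < b)
  have hd1 : (1:ℝ) < d := by exact_mod_cast (by omega : 1 < d)
  have hlogb : 0 < Real.log b := Real.log_pos hb1
  have hlogd : 0 < Real.log d := Real.log_pos hd1
  have hL1 : 1 ≤ L := by
    rcases Nat.eq_zero_or_pos L with h0 | h0
    · exfalso; rw [h0] at hL; push_cast at hL
      have : 0 < Real.log d / Real.log b := by positivity
      linarith
    · exact h0
  have hdb : (d:ℝ) ≤ (b:ℝ) ^ L := by
    have h1 : Real.log d ≤ L * Real.log b := by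
      rw [div_le_iff₀ hlogb] at hL; linarith
    have h2 : Real.log d ≤ Real.log ((b:ℝ) ^ L) := by
      rw [Real.log_pow]; exact_mod_cast h1
    exact (Real.log_le_log_iff (by linarith) (by positivity)).mp h2
  have key := nint_chain b hb t a (L - 1)
    (fun j hj => hcon (a + j) (Nat.le_add_right _ _) (by omega))
  have h1 : 1 / (d:ℝ) ≤ nint ((b:ℝ) ^ a * t) := ht a (by omega)
  have h2 := hcon (a + (L - 1)) (Nat.le_add_right _ _) (by omega)
  have h3 : (b:ℝ) ^ (L - 1) * (1 / d) ≤ nint ((b:ℝ) ^ (a + (L - 1)) * t) := by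
    rw [← key]
    exact mul_le_mul_of_nonneg_left h1 (by positivity)
  have hpow : (b:ℝ) ^ L ≤ 2 * (b:ℝ) ^ 2 * (b:ℝ) ^ (L - 1) := by
    have : (b:ℝ) ^ 2 * (b:ℝ) ^ (L - 1) = (b:ℝ) ^ (L + 1) := by
      rw [← pow_add]; congr 1; omega
    have hmono : (b:ℝ) ^ L ≤ (b:ℝ) ^ (L + 1) :=
      pow_le_pow_right₀ (by linarith) (Nat.le_succ L)
    nlinarith [pow_pos (by linarith : (0:ℝ) < b) (L+1)]
  have hfin : 1 / (2 * (b:ℝ) ^ 2) ≤ (b:ℝ) ^ (L - 1) * (1 / d) := by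
    rw [show (b:ℝ) ^ (L - 1) * (1 / d) = (b:ℝ) ^ (L - 1) / d by ring,
      div_le_div_iff₀ (by positivity) (by linarith)]
    linarith
  linarith


theorem stmt6 (b d N : ℕ) (hb : 2 ≤ b) (hd : 2 ≤ d) (t : ℝ)
    (ht : ∀ i < N, 1 / (d : ℝ) ≤ nint ((b : ℝ) ^ i * t)) :
    (∀ a L : ℕ, a + L ≤ N → Real.log d / Real.log b ≤ (L : ℝ) →
      ∃ i, a ≤ i ∧ i < a + L ∧ 1 / (2 * (b : ℝ) ^ 2) ≤ nint ((b : ℝ) ^ i * t)) ∧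
    (1 / (4 * (b : ℝ) ^ 4)) * (⌊(N : ℝ) * Real.log b / (3 * Real.log d)⌋₊ : ℝ) ≤
      ∑ i ∈ Finset.range N, nint ((b : ℝ) ^ i * t) ^ 2 := by
  have hb1 : (1:ℝ) < b := by exact_mod_cast (by omega : 1 < b)
  have hd1 : (1:ℝ) < d := by exact_mod_cast (by omega : 1 < d)
  have hlogb : 0 < Real.log b := Real.log_pos hb1
  have hlogd : 0 < Real.log d := Real.log_pos hd1
  refine ⟨part1 b d N hb hd t ht, ?_⟩
  set m := ⌊(N : ℝ) * Real.log b / (3 * Real.log d)⌋₊ with hm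
  have hmle : (m:ℝ) ≤ (N : ℝ) * Real.log b / (3 * Real.log d) :=
    Nat.floor_le (by positivity)
  by_cases hcase : Real.log b ≤ 3 * Real.log d
  · -- interval argument
    set r := Real.log d / Real.log b with hr
    have hr0 : 0 < r := by positivity
    have hr3 : 1 / 3 ≤ r := by
      rw [hr, le_div_iff₀ hlogb]; linarith
    set L := ⌈r⌉₊ with hLdef
    have hL1 : 1 ≤ L := Nat.one_le_iff_ne_zero.mpr (by
      simpa [hLdef] using (Nat.ceil_pos.mpr hr0).ne')
    have hrL : r ≤ (L:ℝ) := Nat.le_ceil r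
    have heq : (N : ℝ) * Real.log b / (3 * Real.log d) = N / (3 * r) := by
      rw [hr]; field_simp
    have hmLN : m * L ≤ N := by
      have hcast : ((m * L : ℕ) : ℝ) ≤ (N : ℕ) := by
        push_cast
        by_cases hr1 : r ≤ 1
        · have hLe : L = 1 := le_antisymm (Nat.ceil_le.mpr (by simpa using hr1)) hL1
          rw [hLe]
          push_cast
          rw [heq] at hmle
          have : (N:ℝ) / (3 * r) ≤ N := by
            rw [div_le_iff₀ (by positivity)]
            nlinarith [Nat.cast_nonneg (α := ℝ) N]
          linarith
        · push_neg at hr1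
          have hLr : (L:ℝ) ≤ 2 * r := by
            have := Nat.ceil_lt_add_one (le_of_lt hr0)
            rw [← hLdef] at this
            linarith
          rw [heq] at hmle
          have hm0 : (0:ℝ) ≤ m := Nat.cast_nonneg m
          calc (m:ℝ) * L ≤ ((N:ℝ) / (3 * r)) * (2 * r) := by
                apply mul_le_mul hmle hLr (by positivity) (by positivity)
            _ = 2 * N / 3 := by field_simp
            _ ≤ N := by linarith [Nat.cast_nonneg (α := ℝ) N]
      exact_mod_cast hcast
    -- witnesses
    have Hw : ∀ j : Fin m, ∃ i, j * L ≤ i ∧ i < j * L + L ∧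
        1 / (2 * (b:ℝ) ^ 2) ≤ nint ((b:ℝ) ^ i * t) := by
      intro j
      apply part1 b d N hb hd t ht
      · calc (j:ℕ) * L + L = ((j:ℕ) + 1) * L := by ring
          _ ≤ m * L := Nat.mul_le_mul_right _ j.2
          _ ≤ N := hmLN
      · exact hrL
    choose f hf1 hf2 hf3 using Hw
    have hfmono : StrictMono f := by
      intro j j' hjj
      calc f j < (j:ℕ) * L + L := hf2 j
        _ = ((j:ℕ) + 1) * L := by ring
        _ ≤ (j':ℕ) * L := Nat.mul_le_mul_right _ hjj
        _ ≤ f j' := hf1 j'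
    have hsub : Finset.univ.image f ⊆ Finset.range N := by
      intro i hi
      simp only [Finset.mem_image] at hi
      obtain ⟨j, _, rfl⟩ := hi
      rw [Finset.mem_range]
      calc f j < (j:ℕ) * L + L := hf2 j
        _ = ((j:ℕ) + 1) * L := by ring
        _ ≤ m * L := Nat.mul_le_mul_right _ j.2
        _ ≤ N := hmLN
    calc (1 / (4 * (b:ℝ) ^ 4)) * m = ∑ _j : Fin m, (1 / (4 * (b:ℝ) ^ 4)) := by
          simp [mul_comm]
      _ ≤ ∑ j : Fin m, nint ((b:ℝ) ^ (f j) * t) ^ 2 := by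
          apply Finset.sum_le_sum
          intro j _
          have h0 : (0:ℝ) ≤ 1 / (2 * (b:ℝ) ^ 2) := by positivity
          calc (1 : ℝ) / (4 * (b:ℝ) ^ 4) = (1 / (2 * (b:ℝ) ^ 2)) ^ 2 := by ring
            _ ≤ nint ((b:ℝ) ^ (f j) * t) ^ 2 := pow_le_pow_left₀ h0 (hf3 j) 2
      _ = ∑ i ∈ Finset.univ.image f, nint ((b:ℝ) ^ i * t) ^ 2 := by
          rw [Finset.sum_image (fun j _ j' _ h => hfmono.injective h)]
      _ ≤ ∑ i ∈ Finset.range N, nint ((b:ℝ) ^ i * t) ^ 2 :=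
          Finset.sum_le_sum_of_subset_of_nonneg hsub (fun i _ _ => sq_nonneg _)
  · -- trivial termwise bound
    push_neg at hcase
    have hsum : (N:ℝ) * (1 / (d:ℝ) ^ 2) ≤ ∑ i ∈ Finset.range N, nint ((b:ℝ) ^ i * t) ^ 2 := by
      calc (N:ℝ) * (1 / (d:ℝ) ^ 2) = ∑ _i ∈ Finset.range N, 1 / (d:ℝ) ^ 2 := by
            simp [mul_comm]
        _ ≤ _ := by
            apply Finset.sum_le_sum
            intro i hi
            have h1 := ht i (Finset.mem_range.mp hi)
            have h0 : (0:ℝ) ≤ 1 / d := by positivity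
            calc (1:ℝ) / (d:ℝ) ^ 2 = (1 / (d:ℝ)) ^ 2 := by ring
              _ ≤ _ := pow_le_pow_left₀ h0 h1 2
    have hlog2 : (2:ℝ) / 3 ≤ Real.log d := by
      have h2 : Real.log 2 ≤ Real.log d := by
        apply Real.log_le_log (by norm_num)
        exact_mod_cast hd
      linarith [Real.log_two_gt_d9]
    have hlogb_le : Real.log b ≤ (b:ℝ) := by
      linarith [Real.log_le_sub_one_of_pos (by linarith : (0:ℝ) < b)]
    have hd2b : (d:ℝ) ^ 2 ≤ (b:ℝ) := by
      have h3 : Real.log ((d:ℝ) ^ 3) < Real.log b := by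
        rw [Real.log_pow]; push_cast; linarith
      have h4 : (d:ℝ) ^ 3 < b := (Real.log_lt_log_iff (by positivity) (by linarith)).mp h3
      nlinarith
    have hm2 : (m:ℝ) ≤ (N:ℝ) * b / 2 := by
      have : (N : ℝ) * Real.log b / (3 * Real.log d) ≤ (N:ℝ) * b / 2 := by
        apply div_le_div₀ (by positivity)
          (by nlinarith [Nat.cast_nonneg (α := ℝ) N]) (by norm_num) (by linarith)
      linarith
    have hfin : (1 / (4 * (b:ℝ) ^ 4)) * m ≤ (N:ℝ) * (1 / (d:ℝ) ^ 2) := by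
      have hb0 : (0:ℝ) < b := by linarith
      rw [div_mul_eq_mul_div, one_mul, div_le_iff₀ (by positivity)]
      have hNn : (0:ℝ) ≤ N := Nat.cast_nonneg N
      calc (m:ℝ) ≤ (N:ℝ) * b / 2 := hm2
        _ ≤ (N:ℝ) * (1 / d ^ 2) * (4 * b ^ 4) := by
            rw [div_le_iff₀ (by norm_num : (0:ℝ) < 2)]
            have hd2 : (0:ℝ) < (d:ℝ) ^ 2 := by positivity
            rw [show (N:ℝ) * (1 / d ^ 2) * (4 * b ^ 4) * 2 = (N:ℝ) * (8 * b ^ 4 / d ^ 2) by ring]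
            apply mul_le_mul_of_nonneg_left _ hNn
            rw [le_div_iff₀ hd2]
            have e1 : (b:ℝ) * (d:ℝ) ^ 2 ≤ (b:ℝ) ^ 2 := by nlinarith
            have e2 : (b:ℝ) ^ 2 ≤ (b:ℝ) ^ 4 := pow_le_pow_right₀ hb1.le (by norm_num)
            linarith [pow_nonneg hb0.le 4]

    linarith
end

section
/- Let b ≥ 4, and let j be a nonzero integer with |j| ≤ b^{m+1}, written as j = ±∑_{c=0}^{m} a_c b^c with digits a_c ∈ {0,...,b−1}. Then for each 0 ≤ i < N with N − i − 1 ≤ m, if the digit a_{N−i−1} ∉ {0, b−1}, then ‖b^{i−N} j‖ ≥ 1/b. -/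
open Finset

private lemma digit_sum_lt (b : ℕ) (a : ℕ → ℕ) (ha : ∀ c, a c < b) (hb : 1 ≤ b) :
    ∀ n, ∑ c ∈ Finset.range n, a c * b ^ c < b ^ n := by
  intro n
  induction n with
  | zero => simp
  | succ n ih =>
    rw [Finset.sum_range_succ]
    have h1 : a n * b ^ n ≤ (b - 1) * b ^ n :=
      Nat.mul_le_mul_right _ (Nat.le_sub_one_of_lt (ha n))
    have h2 : (b - 1) * b ^ n + b ^ n = b ^ (n + 1) := by
      obtain ⟨k, rfl⟩ : ∃ k, b = k + 1 := ⟨b - 1, by omega⟩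
      simp only [Nat.add_sub_cancel, pow_succ]
      ring
    linarith

private lemma nint_of_fract (x : ℝ) (d : ℝ) (h1 : d ≤ Int.fract x)
    (h2 : Int.fract x ≤ 1 - d) : d ≤ nint x := by
  rw [nint, abs_sub_round_eq_min]
  exact le_min h1 (by linarith)

theorem stmt8 (b m N i : ℕ) (hb : 4 ≤ b) (a : ℕ → ℕ) (ha : ∀ c, a c < b)
    (j : ℤ) (hj : j ≠ 0) (hjbound : |j| ≤ (b : ℤ) ^ (m + 1))
    (hjrep : j = ∑ c ∈ Finset.range (m + 1), (a c : ℤ) * (b : ℤ) ^ c ∨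
             j = -∑ c ∈ Finset.range (m + 1), (a c : ℤ) * (b : ℤ) ^ c)
    (hiN : i < N) (hNim : N - i - 1 ≤ m)
    (h0 : a (N - i - 1) ≠ 0) (h1 : a (N - i - 1) ≠ b - 1) :
    1 / (b : ℝ) ≤ nint ((j : ℝ) / (b : ℝ) ^ (N - i)) := by
  have hb1 : 1 ≤ b := by omega
  set K := N - i with hK
  have hK1 : 1 ≤ K := by omega
  set c0 := K - 1 with hc0
  have hKc0 : K = c0 + 1 := by omega
  have hc0m : c0 ≤ m := by simpa [hc0, hK] using hNim
  -- decompose the digit sum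
  set r : ℕ := ∑ c ∈ Finset.range K, a c * b ^ c with hr
  set t : ℤ := ∑ c ∈ Finset.range (m + 1 - K), (a (K + c) : ℤ) * (b : ℤ) ^ c with ht
  have hsplit : (∑ c ∈ Finset.range (m + 1), (a c : ℤ) * (b : ℤ) ^ c)
      = (r : ℤ) + (b : ℤ) ^ K * t := by
    have hm1 : m + 1 = K + (m + 1 - K) := by omega
    rw [hm1, Finset.sum_range_add, ht, hr, Finset.mul_sum]
    push_cast
    congr 1
    refine Finset.sum_congr rfl fun c hc => ?_
    rw [pow_add]
    ring
  -- bounds on r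
  have haK : a c0 ≤ b - 2 := by have := ha c0; omega
  have haK1 : 1 ≤ a c0 := by omega
  have hrlo : b ^ c0 ≤ r := by
    calc b ^ c0 ≤ a c0 * b ^ c0 := Nat.le_mul_of_pos_left _ (by omega)
    _ ≤ r := by
        rw [hr, hKc0, Finset.sum_range_succ]
        omega
  have hrhi : r + 1 ≤ (b - 1) * b ^ c0 := by
    have h' := digit_sum_lt b a ha hb1 c0
    have hreq : r = (∑ c ∈ Finset.range c0, a c * b ^ c) + a c0 * b ^ c0 := by
      rw [hr, hKc0, Finset.sum_range_succ]
    have h2 : a c0 * b ^ c0 ≤ (b - 2) * b ^ c0 := Nat.mul_le_mul_right _ haK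
    have key : b ^ c0 + (b - 2) * b ^ c0 = (b - 1) * b ^ c0 := by
      obtain ⟨k, rfl⟩ : ∃ k, b = k + 2 := ⟨b - 2, by omega⟩
      simp only [show k + 2 - 2 = k from rfl, show k + 2 - 1 = k + 1 from rfl]
      ring
    linarith
  -- real bounds on r / b^K
  have hbR : (0:ℝ) < b := by positivity
  have hbKR : (0:ℝ) < (b:ℝ) ^ K := by positivity
  set x : ℝ := (r : ℝ) / (b : ℝ) ^ K with hx
  have hbKeq : (b:ℝ) ^ K = (b:ℝ) ^ c0 * b := by rw [hKc0, pow_succ]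
  have hrloR : ((b:ℝ) ^ c0) ≤ (r:ℝ) := by exact_mod_cast hrlo
  have hrhiR : (r:ℝ) ≤ ((b:ℝ) - 1) * (b:ℝ) ^ c0 - 1 := by
    have h4 : (r:ℝ) + 1 ≤ (((b-1) * b ^ c0 : ℕ) : ℝ) := by exact_mod_cast hrhi
    have h5 : (((b-1) * b ^ c0 : ℕ) : ℝ) = ((b:ℝ) - 1) * (b:ℝ) ^ c0 := by
      push_cast [Nat.cast_sub (show 1 ≤ b by omega)]
      ring
    linarith [h5 ▸ h4]
  have hxlo : 1 / (b:ℝ) ≤ x := by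
    rw [hx, hbKeq, div_le_div_iff₀ hbR (by positivity)]
    calc 1 * ((b:ℝ) ^ c0 * b) = (b:ℝ) ^ c0 * b := by ring
    _ ≤ (r:ℝ) * b := by nlinarith
  have hxhi : x ≤ 1 - 1 / (b:ℝ) := by
    rw [hx, hbKeq, div_le_iff₀ (by positivity)]
    have hc0pos : (0:ℝ) < (b:ℝ) ^ c0 := by positivity
    have : (1 - 1 / (b:ℝ)) * ((b:ℝ) ^ c0 * b) = ((b:ℝ) - 1) * (b:ℝ) ^ c0 := by
      field_simp
    rw [this]; linarith
  have hbK0 : ((b:ℝ) ^ K) ≠ 0 := hbKR.ne'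
  have hx01 : 0 ≤ x ∧ x < 1 := by
    constructor
    · positivity
    · have : 1 / (b:ℝ) > 0 := by positivity
      linarith
  have hfractx : Int.fract x = x := Int.fract_eq_self.mpr hx01
  -- now the two cases
  rcases hjrep with hrep | hrep
  · have hjx : (j : ℝ) / (b : ℝ) ^ K = (t : ℝ) + x := by
      rw [hrep, hsplit]
      push_cast
      rw [add_div, mul_comm ((b:ℝ)^K) (t:ℝ), mul_div_assoc, div_self hbK0,
        mul_one, hx, add_comm]
    rw [hjx]
    apply nint_of_fract
    · rw [show ((t:ℝ) + x) = ((t:ℤ):ℝ) + x from rfl, Int.fract_intCast_add, hfractx]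
      exact hxlo
    · rw [show ((t:ℝ) + x) = ((t:ℤ):ℝ) + x from rfl, Int.fract_intCast_add, hfractx]
      exact hxhi
  · have hjx : (j : ℝ) / (b : ℝ) ^ K = -((t : ℝ) + x) := by
      rw [hrep, hsplit]
      push_cast
      rw [neg_div, add_div, mul_comm ((b:ℝ)^K) (t:ℝ), mul_div_assoc,
        div_self hbK0, mul_one, hx, add_comm]
    rw [hjx]
    have hxne : Int.fract ((t:ℝ) + x) ≠ 0 := by
      rw [show ((t:ℝ) + x) = ((t:ℤ):ℝ) + x from rfl, Int.fract_intCast_add, hfractx]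
      have : 1 / (b:ℝ) > 0 := by positivity
      linarith
    apply nint_of_fract
    · rw [Int.fract_neg hxne,
        show ((t:ℝ) + x) = ((t:ℤ):ℝ) + x from rfl, Int.fract_intCast_add, hfractx]
      linarith
    · rw [Int.fract_neg hxne,
        show ((t:ℝ) + x) = ((t:ℤ):ℝ) + x from rfl, Int.fract_intCast_add, hfractx]
      linarith
end

section
/- Let q = uv with every prime factor of u dividing b and gcd(v, b) = 1, let h satisfy hb ≡ 1 (mod v), let d | bv and ℓ coprime to d. If b^k(a/q + ℓ/d) ∈ ℤ for some k ∈ ℕ, then a ≡ −(bq/d)ℓh (mod v). -/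
theorem stmt12 (b q u v h d ℓ a : ℤ) (k : ℕ)
    (hb : 2 ≤ b) (hu : 0 < u) (hv : 0 < v) (hd : 0 < d)
    (hq : q = u * v)
    (hub : ∀ p : ℤ, Prime p → p ∣ u → p ∣ b)
    (hvb : IsCoprime v b)
    (hh : h * b ≡ 1 [ZMOD v])
    (hdbv : d ∣ b * v)
    (hld : IsCoprime ℓ d)
    (hint : ∃ z : ℤ, ((b : ℚ) ^ k) * ((a : ℚ) / (q : ℚ) + (ℓ : ℚ) / (d : ℚ)) = (z : ℚ)) :
    a ≡ -(b * q / d) * ℓ * h [ZMOD v] := by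
  obtain ⟨z, hz⟩ := hint
  have hq0 : q ≠ 0 := by rw [hq]; positivity
  have hd0 : d ≠ 0 := hd.ne'
  have hqQ : (q : ℚ) ≠ 0 := Int.cast_ne_zero.mpr hq0
  have hdQ : (d : ℚ) ≠ 0 := Int.cast_ne_zero.mpr hd0
  have hdvq : d ∣ b * q := hdbv.trans ⟨u, by rw [hq]; ring⟩
  set m : ℤ := b * q / d with hm
  have hdm : d * m = b * q := Int.mul_ediv_cancel' hdvq
  -- clear denominators
  have hz' : b ^ k * (a * d + ℓ * q) = z * (q * d) := by
    have h2 : ((b : ℚ)) ^ k * ((a : ℚ) * d + (ℓ : ℚ) * q) = (z : ℚ) * (q * d) := by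
      field_simp at hz
      linear_combination hz
    exact_mod_cast h2
  -- multiply by b, cancel d
  have key : b ^ (k + 1) * a + b ^ k * ℓ * m = z * q * b := by
    have h3 : d * (b ^ (k + 1) * a + b ^ k * ℓ * m) = d * (z * q * b) := by
      calc d * (b ^ (k + 1) * a + b ^ k * ℓ * m)
          = b * (b ^ k * (a * d + ℓ * q)) + b ^ k * ℓ * (d * m) - b ^ k * ℓ * (b * q) := by
            ring
        _ = d * (z * q * b) := by rw [hdm, hz']; ring
    exact mul_left_cancel₀ hd0 h3
  have hvq : v ∣ q := ⟨u, by rw [hq]; ring⟩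
  have hdvd : v ∣ b ^ (k + 1) * a + b ^ k * ℓ * m := by
    rw [key]; exact Dvd.dvd.mul_right (Dvd.dvd.mul_left hvq z) b
  have h1 : b ^ (k + 1) * a ≡ -(b ^ k * ℓ * m) [ZMOD v] := by
    rw [Int.modEq_comm, Int.modEq_iff_dvd]
    simpa using hdvd
  calc a ≡ (h * b) ^ (k + 1) * a [ZMOD v] := by
        have := (hh.pow (k + 1)).symm.mul_right a
        simpa using this
    _ = h ^ (k + 1) * (b ^ (k + 1) * a) := by ring
    _ ≡ h ^ (k + 1) * -(b ^ k * ℓ * m) [ZMOD v] := h1.mul_left _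
    _ = -((h * b) ^ k * (m * ℓ * h)) := by ring
    _ ≡ -(1 ^ k * (m * ℓ * h)) [ZMOD v] := ((hh.pow k).mul_right _).neg
    _ = -m * ℓ * h := by ring
end

section
/- Let q = uv with every prime factor of u dividing b and gcd(v, b) = 1, d | bv, ℓ coprime to d, and h with hb ≡ 1 (mod v). If a ≡ −(bq/d)ℓh (mod v) and L is any positive integer with u | b^L, then b^L(a/q + ℓ/d) ∈ ℤ. -/
theorem stmt13 (b q u v h d ℓ a : ℤ) (L : ℕ)
    (hb : 2 ≤ b) (hu : 0 < u) (hv : 0 < v) (hd : 0 < d) (hL : 0 < L)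
    (hq : q = u * v)
    (hub : ∀ p : ℤ, Prime p → p ∣ u → p ∣ b)
    (hvb : IsCoprime v b)
    (hh : h * b ≡ 1 [ZMOD v])
    (hdbv : d ∣ b * v)
    (hld : IsCoprime ℓ d)
    (ha : a ≡ -(b * q / d) * ℓ * h [ZMOD v])
    (huL : u ∣ b ^ L) :
    ∃ z : ℤ, ((b : ℚ) ^ L) * ((a : ℚ) / (q : ℚ) + (ℓ : ℚ) / (d : ℚ)) = (z : ℚ) := by
  obtain ⟨t, ht⟩ := hdbv
  obtain ⟨s, hs⟩ := huL
  obtain ⟨m, hm⟩ : v ∣ 1 - h * b := Int.ModEq.dvd hh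
  have hdiv : b * q / d = u * t := by
    have : b * q = d * (u * t) := by rw [hq]; linear_combination u * ht
    rw [this, Int.mul_ediv_cancel_left _ (by omega : d ≠ 0)]
  obtain ⟨k, hk⟩ : v ∣ a - (-(u * t) * ℓ * h) := by
    have := Int.ModEq.dvd ha.symm
    rwa [hdiv] at this
  refine ⟨b ^ (L - 1) * ℓ * m * t + s * k, ?_⟩
  have hbL : (b : ℚ) ^ L = (b : ℚ) * (b : ℚ) ^ (L - 1) := by
    rw [← pow_succ']
    congr 1
    omega
  have hq0 : (q : ℚ) ≠ 0 := by
    have : 0 < q := by rw [hq]; positivity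
    exact_mod_cast this.ne'
  have hd0 : (d : ℚ) ≠ 0 := by exact_mod_cast hd.ne'
  have hv0 : (v : ℚ) ≠ 0 := by exact_mod_cast hv.ne'
  have hu0 : (u : ℚ) ≠ 0 := by exact_mod_cast hu.ne'
  have hqQ : (q : ℚ) = u * v := by exact_mod_cast hq
  have haQ : (a : ℚ) - (-(u * t) * ℓ * h) = v * k := by exact_mod_cast hk
  have hmQ : (1 : ℚ) - h * b = v * m := by exact_mod_cast hm
  have htQ : (b : ℚ) * v = d * t := by exact_mod_cast ht
  have hsQ : (b : ℚ) ^ L = u * s := by exact_mod_cast hs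
  push_cast
  rw [hbL] at hsQ ⊢
  field_simp
  linear_combination ((b:ℚ)*(b:ℚ)^(L-1)*ℓ - ((b:ℚ)^(L-1)*ℓ*m*t + (s:ℚ)*k)*d) * hqQ + ((b:ℚ)*(b:ℚ)^(L-1)*d) * haQ + ((d:ℚ)*v*k) * hsQ + ((b:ℚ)^(L-1)*ℓ*u) * htQ + ((b:ℚ)^(L-1)*ℓ*u*d*t) * hmQ
end

section
/- (Brauer–Rademacher identity) For positive integers j and k, ∑_{d | j} (μ(d)/φ(d)) c_d(k) = (j/φ(j)) · 𝟙(gcd(j,k) = 1), where c_d(k) := ∑_{ℓ ∈ (ℤ/dℤ)^×} e(ℓk/d) is Ramanujan's sum. -/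
lemma e_eq_pow (ℓ d k : ℕ) : e ((ℓ : ℝ) * k / d) = e ((k : ℝ) / d) ^ ℓ := by
  rw [e, e, ← Complex.exp_nat_mul]
  congr 1
  push_cast
  ring

lemma e_int (n : ℤ) : e (n : ℝ) = 1 := by
  rw [e]
  have : 2 * (Real.pi : ℂ) * Complex.I * ((n : ℝ) : ℂ) = (n : ℤ) * (2 * Real.pi * Complex.I) := by
    push_cast; ring
  rw [this, Complex.exp_int_mul_two_pi_mul_I]

lemma sum_e (d k : ℕ) (hd : 0 < d) :
    ∑ ℓ ∈ Finset.range d, e ((ℓ : ℝ) * k / d) = if d ∣ k then (d : ℂ) else 0 := by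
  have hd' : (d : ℝ) ≠ 0 := Nat.cast_ne_zero.mpr hd.ne'
  simp_rw [e_eq_pow]
  by_cases h : d ∣ k
  · obtain ⟨n, rfl⟩ := h
    have h1 : ((d * n : ℕ) : ℝ) / d = ((n : ℤ) : ℝ) := by push_cast; field_simp
    rw [if_pos (dvd_mul_right d n), h1, e_int]
    simp
  · rw [if_neg h]
    have hz1 : e ((k : ℝ) / d) ≠ 1 := by
      rw [e]
      intro hc
      rw [Complex.exp_eq_one_iff] at hc
      obtain ⟨n, hn⟩ := hc
      apply h
      have hpi : (2 * (Real.pi : ℂ) * Complex.I) ≠ 0 := by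
        simp [Real.pi_ne_zero, Complex.I_ne_zero]
      rw [mul_comm (n:ℂ)] at hn
      have h2 : (((k : ℝ) / d : ℝ) : ℂ) = (n : ℂ) := mul_left_cancel₀ hpi hn
      have h3 : (k : ℝ) / d = (n : ℝ) := by exact_mod_cast h2
      have h4 : (k : ℝ) = (n : ℝ) * d := by field_simp at h3; linarith
      have h5 : (k : ℤ) = n * d := by exact_mod_cast h4
      have : (d : ℤ) ∣ (k : ℤ) := ⟨n, by linarith⟩
      exact_mod_cast this
    have hzd : e ((k : ℝ) / d) ^ d = 1 := by
      rw [← e_eq_pow]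
      have : (d : ℝ) * k / d = ((k : ℤ) : ℝ) := by push_cast; field_simp
      rw [this, e_int]
    rw [geom_sum_eq hz1, hzd]
    simp

noncomputable def ramanujanSum (d k : ℕ) : ℂ :=
  ∑ ℓ ∈ (Finset.range d).filter (fun ℓ => Nat.Coprime ℓ d),
    e ((ℓ : ℝ) * (k : ℝ) / (d : ℝ))

open ArithmeticFunction ArithmeticFunction.Moebius Finset in
lemma ramanujan_conv (d k : ℕ) (hd : 0 < d) :
    ramanujanSum d k =
      ∑ x ∈ d.divisors, (μ x : ℂ) * (if (d / x) ∣ k then ((d / x : ℕ) : ℂ) else 0) := by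
  have hind : ∀ n : ℕ, ∑ i ∈ n.divisors, ((μ i : ℤ) : ℂ) = if n = 1 then 1 else 0 := by
    intro n
    have h1 : ∑ i ∈ n.divisors, (μ i) = (1 : ArithmeticFunction ℤ) n := by
      rw [← moebius_mul_coe_zeta, coe_mul_zeta_apply]
    have := congrArg (fun z : ℤ => (z : ℂ)) h1
    rw [Int.cast_sum] at this
    rw [this, one_apply]
    split <;> simp
  have hdivg : ∀ ℓ : ℕ, (Nat.gcd ℓ d).divisors = d.divisors.filter (· ∣ ℓ) := by
    intro ℓ
    ext x
    simp only [Nat.mem_divisors, mem_filter, Nat.dvd_gcd_iff]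
    constructor
    · rintro ⟨⟨h1, h2⟩, _⟩
      exact ⟨⟨h2, hd.ne'⟩, h1⟩
    · rintro ⟨⟨h2, _⟩, h1⟩
      exact ⟨⟨h1, h2⟩, Nat.gcd_ne_zero_right hd.ne'⟩
  calc ramanujanSum d k
      = ∑ ℓ ∈ Finset.range d, (if Nat.gcd ℓ d = 1 then (1:ℂ) else 0) * e ((ℓ : ℝ) * k / d) := by
        rw [ramanujanSum, sum_filter]
        exact sum_congr rfl fun ℓ _ => by
          unfold Nat.Coprime
          split <;> simp
    _ = ∑ ℓ ∈ Finset.range d, ∑ x ∈ d.divisors,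
          (if x ∣ ℓ then ((μ x : ℤ) : ℂ) else 0) * e ((ℓ : ℝ) * k / d) := by
        refine sum_congr rfl fun ℓ _ => ?_
        rw [← hind (Nat.gcd ℓ d), hdivg ℓ, sum_filter, sum_mul]
    _ = ∑ x ∈ d.divisors, (μ x : ℂ) * ∑ ℓ ∈ (Finset.range d).filter (x ∣ ·), e ((ℓ : ℝ) * k / d) := by
        rw [sum_comm]
        refine sum_congr rfl fun x _ => ?_
        simp only [ite_mul, zero_mul]
        rw [← sum_filter, mul_sum]
    _ = ∑ x ∈ d.divisors, (μ x : ℂ) * (if (d / x) ∣ k then ((d / x : ℕ) : ℂ) else 0) := by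
        refine sum_congr rfl fun x hx => ?_
        obtain ⟨hxd, _⟩ := Nat.mem_divisors.mp hx
        have hx0 : 0 < x := Nat.pos_of_dvd_of_pos hxd hd
        have hq0 : 0 < d / x := Nat.div_pos (Nat.le_of_dvd hd hxd) hx0
        congr 1
        rw [← sum_e (d / x) k hq0]
        refine sum_nbij' (fun ℓ => ℓ / x) (fun m => x * m) ?_ ?_ ?_ ?_ ?_
        · intro ℓ hℓ
          simp only [mem_filter, mem_range] at hℓ ⊢
          exact Nat.div_lt_div_of_lt_of_dvd hxd hℓ.1
        · intro m hm
          simp only [mem_filter, mem_range] at hm ⊢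
          constructor
          · have := Nat.mul_lt_mul_of_le_of_lt (le_refl x) hm hx0
            rwa [Nat.mul_div_cancel' hxd] at this
          · exact Dvd.intro m rfl
        · intro ℓ hℓ
          simp only [mem_filter] at hℓ
          exact Nat.mul_div_cancel' hℓ.2
        · intro m _
          exact Nat.mul_div_cancel_left m hx0
        · intro ℓ hℓ
          simp only [mem_filter] at hℓ
          obtain ⟨m, rfl⟩ := hℓ.2
          have h1 : x * m / x = m := Nat.mul_div_cancel_left m hx0
          simp only [h1]
          congr 1
          have hx0' : (x : ℝ) ≠ 0 := Nat.cast_ne_zero.mpr hx0.ne'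
          have hq0' : ((d / x : ℕ) : ℝ) ≠ 0 := Nat.cast_ne_zero.mpr hq0.ne'
          have hdx : (d : ℝ) = (x : ℝ) * ((d / x : ℕ) : ℝ) := by
            exact_mod_cast (Nat.mul_div_cancel' hxd).symm
          rw [hdx]
          push_cast
          field_simp

open ArithmeticFunction ArithmeticFunction.Moebius ArithmeticFunction.zeta Finset

namespace BR

/-- `g k m = m * 𝟙(m ∣ k)`. -/
def g (k : ℕ) : ArithmeticFunction ℂ :=
  ⟨fun m => if m ∣ k then (m : ℂ) else 0, by simp⟩

lemma g_apply (k m : ℕ) : g k m = if m ∣ k then (m : ℂ) else 0 := rfl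

lemma g_mult (k : ℕ) : (g k).IsMultiplicative := by
  refine ⟨by simp [g_apply], ?_⟩
  intro m n hmn
  simp only [g_apply]
  by_cases hm : m ∣ k
  · by_cases hn : n ∣ k
    · rw [if_pos (hmn.mul_dvd_of_dvd_of_dvd hm hn), if_pos hm, if_pos hn]
      push_cast; ring
    · rw [if_neg (fun h => hn (dvd_trans (dvd_mul_left n m) h)), if_pos hm, if_neg hn, mul_zero]
  · rw [if_neg (fun h => hm (dvd_trans (dvd_mul_right m n) h)), if_neg hm, zero_mul]

/-- Ramanujan sum as arithmetic function: `c k = μ * g k` (Dirichlet convolution). -/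
noncomputable def c (k : ℕ) : ArithmeticFunction ℂ := (μ : ArithmeticFunction ℂ) * g k

lemma c_mult (k : ℕ) : (c k).IsMultiplicative :=
  isMultiplicative_moebius.intCast.mul (g_mult k)

lemma c_eq_ramanujan (d k : ℕ) (hd : 0 < d) : c k d = ramanujanSum d k := by
  rw [ramanujan_conv d k hd, c, mul_apply, Nat.sum_divisorsAntidiagonal (fun a b => ((μ : ArithmeticFunction ℂ) a) * g k b)]
  exact sum_congr rfl fun x _ => by rw [intCoe_apply, g_apply]

/-- `invphi d = (φ d)⁻¹`. -/
noncomputable def invphi : ArithmeticFunction ℂ :=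
  ⟨fun d => ((d.totient : ℂ))⁻¹, by simp⟩

lemma invphi_apply (d : ℕ) : invphi d = ((d.totient : ℂ))⁻¹ := rfl

lemma invphi_mult : invphi.IsMultiplicative := by
  refine ⟨by simp [invphi_apply], ?_⟩
  intro m n hmn
  simp only [invphi_apply, Nat.totient_mul hmn]
  push_cast
  rw [mul_inv]

/-- `f k d = μ d / φ d * c_d(k)`. -/
noncomputable def f (k : ℕ) : ArithmeticFunction ℂ :=
  ((μ : ArithmeticFunction ℂ).pmul invphi).pmul (c k)

lemma f_apply (k d : ℕ) : f k d = (μ d : ℂ) * ((d.totient : ℂ))⁻¹ * c k d := rfl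

lemma f_mult (k : ℕ) : (f k).IsMultiplicative :=
  (isMultiplicative_moebius.intCast.pmul invphi_mult).pmul (c_mult k)

/-- The LHS as arithmetic function. -/
noncomputable def F (k : ℕ) : ArithmeticFunction ℂ := f k * (ζ : ArithmeticFunction ℂ)

lemma F_mult (k : ℕ) : (F k).IsMultiplicative :=
  (f_mult k).mul isMultiplicative_zeta.natCast

lemma F_apply (k n : ℕ) : F k n = ∑ d ∈ n.divisors, f k d := coe_mul_zeta_apply

/-- The RHS as arithmetic function. -/
noncomputable def G (k : ℕ) : ArithmeticFunction ℂ :=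
  ⟨fun j => (j : ℂ) / (j.totient : ℂ) * (if Nat.gcd j k = 1 then 1 else 0), by simp⟩

lemma G_apply (k j : ℕ) :
    G k j = (j : ℂ) / (j.totient : ℂ) * (if Nat.gcd j k = 1 then 1 else 0) := rfl

lemma G_mult (k : ℕ) : (G k).IsMultiplicative := by
  refine ⟨by simp [G_apply], ?_⟩
  intro m n hmn
  simp only [G_apply, Nat.totient_mul hmn]
  have hgcd : Nat.gcd (m * n) k = 1 ↔ Nat.gcd m k = 1 ∧ Nat.gcd n k = 1 :=
    Nat.coprime_mul_iff_left
  by_cases hm : Nat.gcd m k = 1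
  · by_cases hn : Nat.gcd n k = 1
    · rw [if_pos (hgcd.mpr ⟨hm, hn⟩), if_pos hm, if_pos hn]
      push_cast
      rw [mul_one, mul_one, mul_one, div_mul_div_comm]
    · rw [if_neg (fun h => hn (hgcd.mp h).2), if_neg hn]
      ring
  · rw [if_neg (fun h => hm (hgcd.mp h).1), if_neg hm]
    ring


lemma c_prime (k p : ℕ) (hp : p.Prime) :
    c k p = (if p ∣ k then (p : ℂ) else 0) - 1 := by
  rw [c, mul_apply, Nat.sum_divisorsAntidiagonal (fun a b => ((μ : ArithmeticFunction ℂ) a) * g k b)]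
  rw [hp.divisors, sum_pair hp.one_lt.ne]
  simp only [intCoe_apply, g_apply, Nat.div_one, Nat.div_self hp.pos,
    moebius_apply_one, moebius_apply_prime hp]
  simp only [Nat.one_dvd, if_pos, Nat.cast_one]
  push_cast
  ring

lemma phi_prime_cast (p : ℕ) (hp : p.Prime) : ((p.totient : ℕ) : ℂ) = (p : ℂ) - 1 := by
  rw [Nat.totient_prime hp, Nat.cast_sub hp.one_lt.le, Nat.cast_one]

lemma pm1_ne (p : ℕ) (hp : p.Prime) : (p : ℂ) - 1 ≠ 0 := by
  rw [sub_ne_zero]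
  intro h
  have : (p : ℂ) = ((1 : ℕ) : ℂ) := by rw [h]; norm_num
  exact hp.one_lt.ne' (Nat.cast_injective this)

lemma f_prime (k p : ℕ) (hp : p.Prime) :
    f k p = -(((p : ℂ) - 1)⁻¹) * ((if p ∣ k then (p : ℂ) else 0) - 1) := by
  rw [f_apply, c_prime k p hp, phi_prime_cast p hp, moebius_apply_prime hp]
  push_cast
  ring

lemma f_prime_pow_big (k p t : ℕ) (hp : p.Prime) (ht : 2 ≤ t) : f k (p ^ t) = 0 := by
  rw [f_apply, moebius_apply_prime_pow hp (by omega), if_neg (by omega)]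
  simp

lemma F_prime_pow (k p i : ℕ) (hp : p.Prime) :
    F k (p ^ (i + 1)) = if p ∣ k then 0 else (p : ℂ) / ((p : ℂ) - 1) := by
  have hne := pm1_ne p hp
  rw [F_apply, Nat.sum_divisors_prime_pow hp]
  rw [Finset.sum_range_succ', Finset.sum_range_succ']
  have hz : ∑ t ∈ Finset.range i, f k (p ^ (t + 1 + 1)) = 0 :=
    Finset.sum_eq_zero fun t _ => f_prime_pow_big k p (t + 1 + 1) hp (by omega)
  rw [hz, pow_zero, (f_mult k).1, pow_one, f_prime k p hp]
  by_cases h : p ∣ k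
  · rw [if_pos h, if_pos h]
    field_simp
    ring
  · rw [if_neg h, if_neg h]
    field_simp
    ring

lemma G_prime_pow (k p i : ℕ) (hp : p.Prime) :
    G k (p ^ (i + 1)) = if p ∣ k then 0 else (p : ℂ) / ((p : ℂ) - 1) := by
  have hne := pm1_ne p hp
  have hp0 : (p : ℂ) ≠ 0 := Nat.cast_ne_zero.mpr hp.pos.ne'
  have h1 : Nat.gcd (p ^ (i + 1)) k = 1 ↔ ¬ p ∣ k := by
    have h2 := Nat.coprime_pow_left_iff (Nat.succ_pos i) p k
    unfold Nat.Coprime at h2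
    rw [h2]
    exact hp.coprime_iff_not_dvd
  rw [G_apply]
  by_cases h : p ∣ k
  · rw [if_neg (fun hc => (h1.mp hc) h), if_pos h, mul_zero]
  · rw [if_pos (h1.mpr h), if_neg h, mul_one]
    rw [Nat.totient_prime_pow hp (Nat.succ_pos i)]
    simp only [Nat.succ_sub_one]
    push_cast [Nat.cast_sub hp.one_lt.le]
    rw [pow_succ]
    have hpp : ((p : ℂ)) ^ i ≠ 0 := pow_ne_zero i hp0
    field_simp

lemma F_eq_G (k : ℕ) : F k = G k := by
  rw [ArithmeticFunction.IsMultiplicative.eq_iff_eq_on_prime_powers (F k) (F_mult k) (G k) (G_mult k)]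
  intro p i hp
  cases i with
  | zero => rw [pow_zero, (F_mult k).1, (G_mult k).1]
  | succ i => rw [F_prime_pow k p i hp, G_prime_pow k p i hp]

end BR

/-- The Brauer–Rademacher identity. -/
theorem stmt14 (j k : ℕ) (hj : 0 < j) (hk : 0 < k) :
    ∑ d ∈ j.divisors,
        ((ArithmeticFunction.moebius d : ℂ) / (Nat.totient d : ℂ)) * ramanujanSum d k =
      ((j : ℂ) / (Nat.totient j : ℂ)) * (if Nat.gcd j k = 1 then 1 else 0) := by
  have h1 : ∑ d ∈ j.divisors,
      ((ArithmeticFunction.moebius d : ℂ) / (Nat.totient d : ℂ)) * ramanujanSum d k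
      = BR.F k j := by
    rw [BR.F_apply]
    refine Finset.sum_congr rfl fun d hd => ?_
    have hd0 : 0 < d := Nat.pos_of_mem_divisors hd
    rw [BR.f_apply, BR.c_eq_ramanujan d k hd0, div_eq_mul_inv]
  rw [h1, BR.F_eq_G, BR.G_apply]
end

section
/- Let (X, ℬ, μ, T) be a measure-preserving system and f ∈ L^∞(μ) with f ≥ 0 and ∫ f dμ > 0. Let ρ be the positive finite measure on [0,1) (from the spectral theorem) with ∫ f · T^n f dμ = ∫₀¹ e(nθ) dρ(θ) for all n ≥ 0. Then ρ({0}) = ∫ E(f | ℐ)² dμ > 0, where ℐ is the σ-algebra of T-invariant sets. -/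
open MeasureTheory Filter
open scoped ENNReal NNReal Topology

/-- The σ-algebra of `T`-invariant measurable sets. -/
def invSigma {X : Type*} [MeasurableSpace X] (T : X → X) : MeasurableSpace X where
  MeasurableSet' s := MeasurableSet s ∧ T ⁻¹' s = s
  measurableSet_empty := ⟨MeasurableSet.empty, by simp⟩
  measurableSet_compl s hs := ⟨hs.1.compl, by rw [Set.preimage_compl, hs.2]⟩
  measurableSet_iUnion f hf := ⟨MeasurableSet.iUnion fun i => (hf i).1, by
    rw [Set.preimage_iUnion]; exact Set.iUnion_congr fun i => (hf i).2⟩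


lemma exists_invSigma_rep {X : Type*} [MeasurableSpace X] {μ : Measure X} {T : X → X}
    (hT : MeasurePreserving T μ μ) {h : X → ℝ} (hm : Measurable h)
    (hinv : (fun x => h (T x)) =ᵐ[μ] h) :
    ∃ h' : X → ℝ, Measurable[invSigma T] h' ∧ h' =ᵐ[μ] h := by
  let h' : X → ℝ := fun x => liminf (fun n => h (T^[n] x)) atTop
  have hh' : ∀ x, h' x = liminf (fun n => h (T^[n] x)) atTop := fun _ => rfl
  have hcomp : ∀ x, h' (T x) = h' x := by
    intro x
    show liminf (fun n => h (T^[n] (T x))) atTop = liminf (fun n => h (T^[n] x)) atTop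
    have h1 : (fun n => h (T^[n] (T x))) = fun n => h (T^[n+1] x) := by
      funext n; rw [Function.iterate_succ_apply]
    rw [h1]
    exact liminf_nat_add (fun n => h (T^[n] x)) 1
  have hmeas : Measurable h' := Measurable.liminf fun n => hm.comp (hT.iterate n).measurable
  refine ⟨h', fun s hs => ⟨hmeas hs, ?_⟩, ?_⟩
  · ext x
    simp only [Set.mem_preimage]
    rw [hcomp x]
  · set N := {x | h (T x) ≠ h x} with hNdef
    have hN : μ N = 0 := hinv
    have hNm : MeasurableSet N :=
      (measurableSet_eq_fun (hm.comp hT.measurable) hm).compl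
    have hB : μ (⋃ n, T^[n] ⁻¹' N) = 0 := by
      refine measure_iUnion_null fun n => ?_
      rw [(hT.iterate n).measure_preimage hNm.nullMeasurableSet]
      exact hN
    have hBc : ∀ᵐ x ∂μ, x ∉ ⋃ n, T^[n] ⁻¹' N := by
      rw [← MeasureTheory.measure_eq_zero_iff_ae_notMem] at *
      exact hB
    filter_upwards [hBc] with x hx
    have horbit : ∀ n, h (T^[n] x) = h x := by
      intro n
      induction n with
      | zero => rfl
      | succ n ih =>
        have hxn : T^[n] x ∉ N := fun hmem => hx (Set.mem_iUnion.mpr ⟨n, hmem⟩)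
        have : h (T (T^[n] x)) = h (T^[n] x) := not_not.mp hxn
        rw [Function.iterate_succ_apply', this, ih]
    have : (fun n : ℕ => h (T^[n] x)) = fun _ => h x := funext horbit
    rw [hh', this]
    exact liminf_const _

lemma comp_eq_of_invSigma {X : Type*} [MeasurableSpace X] {T : X → X} {g : X → ℝ}
    (hg : StronglyMeasurable[invSigma T] g) : ∀ x, g (T x) = g x := by
  intro x
  obtain ⟨-, heq⟩ : MeasurableSet (g ⁻¹' {g x}) ∧ T ⁻¹' (g ⁻¹' {g x}) = g ⁻¹' {g x} :=
    hg.measurable (measurableSet_singleton (g x))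
  have hx : x ∈ g ⁻¹' {g x} := rfl
  have : x ∈ T ⁻¹' (g ⁻¹' {g x}) := heq.symm ▸ hx
  exact this

lemma condexp_pairing {X : Type*} {m0 : MeasurableSpace X} {μ : Measure X}
    [IsProbabilityMeasure μ] {m : MeasurableSpace X} (hm : m ≤ m0) {f h : X → ℝ} (hf : MemLp f ⊤ μ)
    (hfh : Integrable (h * f) μ) (hhm : StronglyMeasurable[m] h) :
    ∫ x, f x * h x ∂μ = ∫ x, (μ[f|m]) x * h x ∂μ := by
  have hfi : Integrable f μ := hf.integrable le_top
  have key : μ[(h * f : X → ℝ)|m] =ᵐ[μ] h * μ[f|m] :=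
    condExp_mul_of_stronglyMeasurable_left hhm hfh hfi
  have h1 : ∫ x, (μ[(h * f : X → ℝ)|m]) x ∂μ = ∫ x, (h * f : X → ℝ) x ∂μ :=
    integral_condExp hm
  have h2 : ∫ x, (μ[(h * f : X → ℝ)|m]) x ∂μ = ∫ x, h x * (μ[f|m]) x ∂μ :=
    integral_congr_ae key
  calc ∫ x, f x * h x ∂μ = ∫ x, (h * f : X → ℝ) x ∂μ := by
        simp only [Pi.mul_apply, mul_comm]
    _ = ∫ x, h x * (μ[f|m]) x ∂μ := h1.symm.trans h2
    _ = ∫ x, (μ[f|m]) x * h x ∂μ := by simp only [mul_comm]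

noncomputable def koopman {X : Type*} [MeasurableSpace X] {μ : Measure X} {T : X → X}
    (hT : MeasurePreserving T μ μ) : Lp ℝ 2 μ →L[ℝ] Lp ℝ 2 μ :=
  LinearMap.mkContinuous
    { toFun := fun v => Lp.compMeasurePreserving T hT v
      map_add' := fun v w => map_add _ v w
      map_smul' := fun c v => by
        refine Lp.ext ?_
        have h1 := Lp.coeFn_compMeasurePreserving (c • v) hT
        have h2 := Lp.coeFn_compMeasurePreserving v hT
        have h3 : ((c • v : Lp ℝ 2 μ) : X → ℝ) ∘ T =ᵐ[μ] (fun x => c * (v : X → ℝ) x) ∘ T :=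
          hT.quasiMeasurePreserving.ae_eq
            (by filter_upwards [Lp.coeFn_smul c v] with x hx; simp [hx])
        have h4 := Lp.coeFn_smul c (Lp.compMeasurePreserving T hT v)
        filter_upwards [h1, h3, h4, h2] with x e1 e3 e4 e2
        simp only [RingHom.id_apply]
        rw [e1, e3, e4]
        simp only [Function.comp_apply, Pi.smul_apply, smul_eq_mul, e2] }
    1 (fun v => by simp [Lp.norm_compMeasurePreserving])


set_option synthInstance.maxHeartbeats 1000000 in
set_option maxHeartbeats 1000000 in
theorem stmt16 {X : Type*} [MeasurableSpace X] (μ : Measure X) [IsProbabilityMeasure μ]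
    (T : X → X) (hT : MeasurePreserving T μ μ)
    (f : X → ℝ) (hf : MemLp f ⊤ μ) (hf0 : 0 ≤ f) (hfpos : 0 < ∫ x, f x ∂μ)
    (ρ : Measure ℝ) [IsFiniteMeasure ρ] (hρsupp : ρ (Set.Ico (0 : ℝ) 1)ᶜ = 0)
    (hρ : ∀ n : ℕ, ((∫ x, f x * f (T^[n] x) ∂μ : ℝ) : ℂ) = ∫ θ, e ((n : ℝ) * θ) ∂ρ) :
    ρ {0} = ENNReal.ofReal (∫ x, (μ[f | invSigma T]) x ^ 2 ∂μ) ∧ 0 < ρ {0} := by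
  classical
  have hm : invSigma T ≤ ‹MeasurableSpace X› := fun s hs => hs.1
  set g : X → ℝ := μ[f | invSigma T] with hgdef
  -- boundedness
  set C : ℝ := (eLpNorm f ⊤ μ).toReal with hCdef
  have hfC : ∀ᵐ x ∂μ, ‖f x‖ ≤ C := by
    filter_upwards [ae_le_eLpNormEssSup (f := f) (μ := μ)] with x hx
    have h2 : (‖f x‖₊ : ℝ≥0∞) ≤ eLpNorm f ⊤ μ := by
      rw [eLpNorm_exponent_top]; exact hx
    have h3 := ENNReal.toReal_mono hf.2.ne h2
    simpa [hCdef] using h3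
  have hfi : Integrable f μ := hf.integrable le_top
  have hf2 : MemLp f 2 μ := hf.mono_exponent le_top
  have hgsm : StronglyMeasurable[invSigma T] g := stronglyMeasurable_condExp
  have hgC : ∀ᵐ x ∂μ, ‖g x‖ ≤ C := by
    have hub : μ[f | invSigma T] ≤ᵐ[μ] μ[(fun _ => C : X → ℝ) | invSigma T] := by
      refine condExp_mono hfi (integrable_const C) ?_
      filter_upwards [hfC] with x hx
      exact le_trans (le_abs_self _) hx
    have hlb : μ[(fun _ => -C : X → ℝ) | invSigma T] ≤ᵐ[μ] μ[f | invSigma T] := by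
      refine condExp_mono (integrable_const (-C)) hfi ?_
      filter_upwards [hfC] with x hx
      exact (abs_le.mp hx).1
    filter_upwards [hub, hlb] with x h1 h2
    rw [condExp_const hm] at h1 h2
    rw [Real.norm_eq_abs, abs_le]
    exact ⟨h2, h1⟩
  have hg_top : MemLp g ⊤ μ :=
    memLp_top_of_bound ((hgsm.mono hm).aestronglyMeasurable) C hgC
  have hg2 : MemLp g 2 μ := hg_top.mono_exponent le_top
  have hgi : Integrable g μ := hg_top.integrable le_top
  have hgT : ∀ x, g (T x) = g x := comp_eq_of_invSigma hgsm
  -- L² objects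
  set F : Lp ℝ 2 μ := hf2.toLp f with hFdef
  set G : Lp ℝ 2 μ := hg2.toLp g with hGdef
  set U : Lp ℝ 2 μ →L[ℝ] Lp ℝ 2 μ := koopman hT with hUdef
  have hUapp : ∀ v : Lp ℝ 2 μ, (U v : X → ℝ) =ᵐ[μ] (v : X → ℝ) ∘ T := by
    intro v
    exact Lp.coeFn_compMeasurePreserving v hT
  have hU1 : ‖U‖ ≤ 1 := by
    refine ContinuousLinearMap.opNorm_le_bound _ zero_le_one (fun v => ?_)
    rw [one_mul]
    show ‖Lp.compMeasurePreserving T hT v‖ ≤ ‖v‖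
    rw [Lp.norm_compMeasurePreserving]
  -- iterates
  have hUn : ∀ n : ℕ, ((⇑U)^[n] F : X → ℝ) =ᵐ[μ] fun x => f (T^[n] x) := by
    intro n
    induction n with
    | zero => simpa using hf2.coeFn_toLp
    | succ n ih =>
      rw [Function.iterate_succ_apply']
      have h1 : (U ((⇑U)^[n] F) : X → ℝ) =ᵐ[μ] ((⇑U)^[n] F : X → ℝ) ∘ T := hUapp _
      have h2 : ((⇑U)^[n] F : X → ℝ) ∘ T =ᵐ[μ] (fun x => f (T^[n] x)) ∘ T :=
        hT.quasiMeasurePreserving.ae_eq ih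
      refine h1.trans (h2.trans (Filter.EventuallyEq.of_eq ?_))
      funext x
      simp [Function.comp, Function.iterate_succ_apply]
  have hinner : ∀ n : ℕ, (inner ℝ F ((⇑U)^[n] F) : ℝ) = ∫ x, f x * f (T^[n] x) ∂μ := by
    intro n
    rw [MeasureTheory.L2.inner_def]
    refine integral_congr_ae ?_
    filter_upwards [hf2.coeFn_toLp, hUn n] with x h1 h2
    rw [h1, h2]
    simp [RCLike.inner_apply', mul_comm]
  -- G is a fixed point of U
  have hGfix : U G = G := by
    refine Lp.ext ?_
    have h1 : (U G : X → ℝ) =ᵐ[μ] (G : X → ℝ) ∘ T := hUapp G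
    have h2 : ((G : X → ℝ)) ∘ T =ᵐ[μ] g ∘ T := hT.quasiMeasurePreserving.ae_eq hg2.coeFn_toLp
    have h3 : g ∘ T = g := funext hgT
    refine h1.trans (h2.trans ?_)
    rw [h3]
    exact hg2.coeFn_toLp.symm
  have hGS : G ∈ U.eqLocus (1 : Lp ℝ 2 μ →L[ℝ] Lp ℝ 2 μ) :=
    LinearMap.mem_eqLocus.mpr (by simpa using hGfix)
  have hperp : ∀ w ∈ U.eqLocus (1 : Lp ℝ 2 μ →L[ℝ] Lp ℝ 2 μ),
      (inner ℝ (F - G) w : ℝ) = 0 := by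
    intro w hw
    have hwfix : U w = w := by simpa using LinearMap.mem_eqLocus.mp hw
    have hw' : (fun x => (w : X → ℝ) (T x)) =ᵐ[μ] (w : X → ℝ) := by
      have h1 := hUapp w
      rw [hwfix] at h1
      exact h1.symm
    obtain ⟨h', h'meas, h'eq⟩ := exists_invSigma_rep hT (Lp.stronglyMeasurable w).measurable hw'
    have h'sm : StronglyMeasurable[invSigma T] h' := h'meas.stronglyMeasurable
    have hwi : Integrable (⇑w) μ := (Lp.memLp w).integrable one_le_two
    have h'i : Integrable h' μ := hwi.congr h'eq.symm
    have hint1 : Integrable (fun x => f x * h' x) μ :=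
      Integrable.bdd_mul h'i hf.aestronglyMeasurable hfC
    have hint2 : Integrable (fun x => g x * h' x) μ :=
      Integrable.bdd_mul h'i (hg_top.aestronglyMeasurable) hgC
    have hfh' : Integrable (h' * f) μ :=
      hint1.congr (Filter.EventuallyEq.of_eq (funext fun x => mul_comm (f x) (h' x)))
    have hpair := condexp_pairing hm hf hfh' h'sm
    rw [← hgdef] at hpair
    have hFG : (inner ℝ (F - G) w : ℝ) = ∫ x, (f x - g x) * h' x ∂μ := by
      rw [MeasureTheory.L2.inner_def]
      refine integral_congr_ae ?_
      filter_upwards [Lp.coeFn_sub F G, hf2.coeFn_toLp, hg2.coeFn_toLp, h'eq] with x e1 e2 e3 e4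
      simp only [RCLike.inner_apply', conj_trivial, e1, Pi.sub_apply, ← e4]; simp only [hFdef, hGdef, e2, e3]
    have hsub : ∫ x, (f x - g x) * h' x ∂μ
        = (∫ x, f x * h' x ∂μ) - ∫ x, g x * h' x ∂μ := by
      rw [← integral_sub hint1 hint2]
      congr 1
      funext x
      ring
    rw [hFG, hsub, hpair, sub_self]
  have horth : (((U.eqLocus (1 : Lp ℝ 2 μ →L[ℝ] Lp ℝ 2 μ)).orthogonalProjectionOnto F :
      Lp ℝ 2 μ)) = G :=
    Submodule.eq_starProjection_of_mem_of_inner_eq_zero hGS hperp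
  have hmain := U.tendsto_birkhoffAverage_orthogonalProjection hU1 F
  rw [horth] at hmain
  have hlim1 : Filter.Tendsto (fun N => (inner ℝ F (birkhoffAverage ℝ (⇑U) _root_.id N F) : ℝ))
      atTop (𝓝 (inner ℝ F G : ℝ)) := Filter.Tendsto.inner tendsto_const_nhds hmain
  set a : ℕ → ℝ := fun N => (N:ℝ)⁻¹ * ∑ n ∈ Finset.range N, ∫ x, f x * f (T^[n] x) ∂μ with hadef
  have ha : ∀ N, (inner ℝ F (birkhoffAverage ℝ (⇑U) _root_.id N F) : ℝ) = a N := by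
    intro N
    simp only [hadef, birkhoffAverage, birkhoffSum]
    rw [real_inner_smul_right, inner_sum]
    congr 1
    refine Finset.sum_congr rfl fun n _ => ?_
    exact hinner n
  have hfg_int : Integrable (fun x => f x * g x) μ :=
    Integrable.bdd_mul hgi hf.aestronglyMeasurable hfC
  have hgf_int : Integrable (g * f) μ :=
    hfg_int.congr (Filter.EventuallyEq.of_eq (funext fun x => mul_comm (f x) (g x)))
  have hpairg := condexp_pairing hm hf hgf_int hgsm
  rw [← hgdef] at hpairg
  have hFGI : (inner ℝ F G : ℝ) = ∫ x, g x ^ 2 ∂μ := by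
    have h1 : (inner ℝ F G : ℝ) = ∫ x, f x * g x ∂μ := by
      rw [MeasureTheory.L2.inner_def]
      refine integral_congr_ae ?_
      filter_upwards [hf2.coeFn_toLp, hg2.coeFn_toLp] with x e1 e2
      simp only [RCLike.inner_apply', conj_trivial, hFdef, hGdef, e1, e2]
    rw [h1, hpairg]
    congr 1
    funext x
    rw [sq]
  have hlimA : Filter.Tendsto a atTop (𝓝 (∫ x, g x ^ 2 ∂μ)) := by
    rw [hFGI] at hlim1
    exact hlim1.congr ha
  -- complex exponential facts
  have he_norm : ∀ x : ℝ, ‖e x‖ = 1 := by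
    intro x
    rw [e, Complex.norm_exp]
    have h0 : (2 * (Real.pi : ℂ) * Complex.I * (x : ℂ)).re = 0 := by
      simp [Complex.mul_re, Complex.mul_im]
    rw [h0, Real.exp_zero]
  have he_cont : Continuous e := by
    unfold e
    exact Complex.continuous_exp.comp (by continuity)
  have he_int : ∀ n : ℕ, Integrable (fun θ => e ((n:ℝ) * θ)) ρ := by
    intro n
    refine Integrable.mono' (integrable_const (1:ℝ))
      ((he_cont.comp (by continuity)).aestronglyMeasurable) ?_
    exact Filter.Eventually.of_forall fun θ => le_of_eq (he_norm _)
  set s : ℕ → ℝ → ℂ := fun N θ => (N:ℂ)⁻¹ * ∑ n ∈ Finset.range N, e ((n:ℝ)*θ) with hsdef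
  have hb : ∀ N, ((a N : ℝ) : ℂ) = ∫ θ, s N θ ∂ρ := by
    intro N
    have h1 : ∫ θ, s N θ ∂ρ
        = (N:ℂ)⁻¹ * ∫ θ, (∑ n ∈ Finset.range N, e ((n:ℝ)*θ)) ∂ρ := by
      simp only [hsdef]
      rw [integral_const_mul]
    have h2 : ∫ θ, (∑ n ∈ Finset.range N, e ((n:ℝ)*θ)) ∂ρ
        = ∑ n ∈ Finset.range N, ∫ θ, e ((n:ℝ)*θ) ∂ρ :=
      integral_finset_sum _ (fun n _ => he_int n)
    rw [h1, h2]
    simp only [hadef]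
    push_cast
    congr 1
    exact Finset.sum_congr rfl fun n _ => hρ n
  have hbound : ∀ (N : ℕ) (θ : ℝ), ‖s N θ‖ ≤ 1 := by
    intro N θ
    rcases Nat.eq_zero_or_pos N with h0 | hpos
    · simp [hsdef, h0]
    · have h1 : ‖∑ n ∈ Finset.range N, e ((n:ℝ)*θ)‖ ≤ (N:ℝ) := by
        calc ‖∑ n ∈ Finset.range N, e ((n:ℝ)*θ)‖
            ≤ ∑ n ∈ Finset.range N, ‖e ((n:ℝ)*θ)‖ := norm_sum_le _ _
          _ = (N:ℝ) := by simp [he_norm]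
      have hNne : (N:ℝ) ≠ 0 := Nat.cast_ne_zero.mpr hpos.ne'
      calc ‖s N θ‖ = ‖(N:ℂ)⁻¹‖ * ‖∑ n ∈ Finset.range N, e ((n:ℝ)*θ)‖ := norm_mul _ _
        _ ≤ (N:ℝ)⁻¹ * (N:ℝ) := by
            refine mul_le_mul (le_of_eq ?_) h1 (norm_nonneg _) (by positivity)
            rw [norm_inv]
            congr 1
            exact Complex.norm_natCast N
        _ = 1 := inv_mul_cancel₀ hNne
  have hmeas_s : ∀ N, AEStronglyMeasurable (s N) ρ := by
    intro N
    refine Continuous.aestronglyMeasurable ?_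
    simp only [hsdef]
    exact continuous_const.mul (continuous_finset_sum _ fun n _ =>
      he_cont.comp (continuous_const.mul continuous_id))
  have hae01 : ∀ᵐ θ ∂ρ, θ ∈ Set.Ico (0:ℝ) 1 := by
    rw [MeasureTheory.ae_iff]
    simpa [Set.compl_def] using hρsupp
  have hptwise : ∀ᵐ θ ∂ρ, Filter.Tendsto (fun N => s N θ) atTop
      (𝓝 (Set.indicator ({0} : Set ℝ) (fun _ => (1:ℂ)) θ)) := by
    filter_upwards [hae01] with θ hθ
    rcases eq_or_ne θ 0 with rfl | hθ0
    · have hsval : ∀ N : ℕ, 1 ≤ N → s N 0 = 1 := by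
        intro N hN
        have he0 : ∀ n : ℕ, e ((n:ℝ) * 0) = 1 := by
          intro n; simp [e, Complex.exp_zero]
        simp only [hsdef, he0, Finset.sum_const, Finset.card_range, nsmul_eq_mul, mul_one]
        exact inv_mul_cancel₀ (Nat.cast_ne_zero.mpr (Nat.one_le_iff_ne_zero.mp hN))
      have hind : Set.indicator ({0} : Set ℝ) (fun _ => (1:ℂ)) 0 = 1 := by simp
      rw [hind]
      refine Filter.Tendsto.congr' ?_ tendsto_const_nhds
      filter_upwards [Filter.eventually_ge_atTop 1] with N hN
      exact (hsval N hN).symm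
    · have hind : Set.indicator ({0} : Set ℝ) (fun _ => (1:ℂ)) θ = 0 := by
        simp [hθ0]
      rw [hind]
      have hθpos : 0 < θ := lt_of_le_of_ne hθ.1 (Ne.symm hθ0)
      have hθlt : θ < 1 := hθ.2
      set z : ℂ := e θ with hz
      have hz1 : z ≠ 1 := by
        intro hcon
        rw [hz, e, Complex.exp_eq_one_iff] at hcon
        obtain ⟨n, hn⟩ := hcon
        have h2pi : (2 * (Real.pi:ℂ) * Complex.I) ≠ 0 := by
          simp [Real.pi_ne_zero, Complex.I_ne_zero]
        have hθn : (θ : ℂ) = (n : ℂ) := by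
          have : 2 * (Real.pi:ℂ) * Complex.I * (θ:ℂ)
              = 2 * (Real.pi:ℂ) * Complex.I * (n:ℂ) := by
            rw [hn]; ring
          exact mul_left_cancel₀ h2pi this
        have hθn' : θ = (n : ℝ) := by exact_mod_cast hθn
        rw [hθn'] at hθpos hθlt
        have h1 : 0 < n := by exact_mod_cast hθpos
        have h2 : n < 1 := by exact_mod_cast hθlt
        omega
      have hzn : ∀ n : ℕ, e ((n:ℝ) * θ) = z ^ n := by
        intro n
        rw [hz, e, e, ← Complex.exp_nat_mul]
        congr 1
        push_cast
        ring
      have hznorm : ‖z‖ = 1 := he_norm θ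
      refine squeeze_zero_norm (f := fun N => s N θ) (a := fun N => (N:ℝ)⁻¹ * (2 / ‖z - 1‖)) ?_ ?_
      · intro N
        have hgeom : ∑ n ∈ Finset.range N, e ((n:ℝ)*θ) = (z ^ N - 1) / (z - 1) := by
          rw [Finset.sum_congr rfl fun n _ => hzn n]
          exact geom_sum_eq hz1 N
        calc ‖s N θ‖ = ‖(N:ℂ)⁻¹‖ * ‖(z ^ N - 1) / (z - 1)‖ := by
              rw [hsdef]; rw [norm_mul, hgeom]
          _ = (N:ℝ)⁻¹ * (‖z ^ N - 1‖ / ‖z - 1‖) := by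
              rw [norm_div, norm_inv, Complex.norm_natCast]
          _ ≤ (N:ℝ)⁻¹ * (2 / ‖z - 1‖) := by
              have hz0 : (0:ℝ) < ‖z - 1‖ := by
                rw [norm_pos_iff]; exact sub_ne_zero.mpr hz1
              gcongr
              calc ‖z ^ N - 1‖ ≤ ‖z ^ N‖ + ‖(1:ℂ)‖ := norm_sub_le _ _
                _ = 2 := by rw [norm_pow, hznorm, one_pow, norm_one]; norm_num
      · have := tendsto_inv_atTop_nhds_zero_nat.mul_const (2 / ‖z - 1‖)
        simpa using this
  have hDCT := tendsto_integral_of_dominated_convergence (fun _ => (1:ℝ)) hmeas_s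
    (integrable_const 1) (fun N => Filter.Eventually.of_forall fun θ => hbound N θ) hptwise
  have hIind : ∫ θ, Set.indicator ({0}:Set ℝ) (fun _ => (1:ℂ)) θ ∂ρ = ((ρ {0}).toReal : ℂ) := by
    rw [integral_indicator_const (1:ℂ) (measurableSet_singleton 0)]
    simp [Complex.real_smul, measureReal_def]
  have hlimC1 : Filter.Tendsto (fun N => ((a N : ℝ):ℂ)) atTop
      (𝓝 ((∫ x, g x ^ 2 ∂μ : ℝ) : ℂ)) := (Complex.continuous_ofReal.tendsto _).comp hlimA
  have hlimC2 : Filter.Tendsto (fun N => ((a N : ℝ):ℂ)) atTop (𝓝 (((ρ {0}).toReal : ℝ) : ℂ)) := by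
    rw [hIind] at hDCT
    exact hDCT.congr fun N => (hb N).symm
  have hEq : (∫ x, g x ^ 2 ∂μ) = (ρ {0}).toReal := by
    have huniq := tendsto_nhds_unique hlimC1 hlimC2
    exact_mod_cast huniq
  constructor
  · rw [hEq, ENNReal.ofReal_toReal (measure_ne_top ρ _)]
  · have hGne : G ≠ 0 := by
      intro h0
      have hg0 : g =ᵐ[μ] 0 := by
        have hcoe := hg2.coeFn_toLp
        rw [← hGdef] at hcoe
        rw [h0] at hcoe
        exact hcoe.symm.trans (Lp.coeFn_zero _ _ _)
      have hint0 : ∫ x, g x ∂μ = 0 := by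
        rw [integral_congr_ae hg0]; simp
      have hgf : ∫ x, g x ∂μ = ∫ x, f x ∂μ := by
        rw [hgdef]; exact integral_condExp hm
      rw [hgf] at hint0
      exact absurd hint0 (ne_of_gt hfpos)
    have hpos : 0 < ∫ x, g x ^ 2 ∂μ := by
      have h1 : (inner ℝ G G : ℝ) = ∫ x, g x ^ 2 ∂μ := by
        rw [MeasureTheory.L2.inner_def]
        refine integral_congr_ae ?_
        filter_upwards [hg2.coeFn_toLp] with x e1
        simp [RCLike.inner_apply', hGdef, e1, sq]
      rw [← h1, real_inner_self_eq_norm_sq]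
      exact pow_pos (norm_pos_iff.mpr hGne) 2
    rw [hEq] at hpos
    exact (ENNReal.toReal_pos_iff.mp hpos).1
end
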